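/- arXiv:1907.11209 — 6 statements merged into one kernel-verified Lean document; each statement's English description precedes it below -/
import Mathlib

section
/- If x is an extreme point of the polyhedron P(G) = {x ∈ ℝ^V : x_u + x_v ≥ 1 for every edge {u,v} of G, x ≥ 0}, then x_v ∈ {0, 1/2, 1} for every vertex v. -/
open Finset

def IsVC {V : Type*} (G : SimpleGraph V) (S : Set V) : Prop :=
  ∀ ⦃u v⦄, G.Adj u v → u ∈ S ∨ v ∈ S

def IsIndep {V : Type*} (G : SimpleGraph V) (S : Set V) : Prop :=
  ∀ ⦃u⦄, u ∈ S → ∀ ⦃v⦄, v ∈ S → ¬ G.Adj u v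

def lpPoly {V : Type*} (G : SimpleGraph V) : Set (V → ℝ) :=
  {x | (∀ v, 0 ≤ x v) ∧ ∀ ⦃u v⦄, G.Adj u v → 1 ≤ x u + x v}

/-- Optimal value of the fractional coloring LP of the subgraph of `G` induced on `s`:
weights on independent sets contained in `s` covering every vertex of `s`. -/
noncomputable def fracChromOn {V : Type*} [Fintype V] [DecidableEq V]
    (G : SimpleGraph V) (s : Set V) : ℝ :=
  sInf {t | ∃ y : Finset V → ℝ, (∀ U, 0 ≤ y U) ∧
    (∀ U, y U ≠ 0 → IsIndep G ↑U ∧ ↑U ⊆ s) ∧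
    (∀ v ∈ s, 1 ≤ ∑ U : Finset V, if v ∈ U then y U else 0) ∧
    t = ∑ U : Finset V, y U}

/-- Fractional chromatic number of `G`. -/
noncomputable def fracChrom {V : Type*} [Fintype V] [DecidableEq V]
    (G : SimpleGraph V) : ℝ :=
  fracChromOn G Set.univ

/-- Optimal value of the vertex cover LP relaxation under cost `c`. -/
noncomputable def lpVal {V : Type*} [Fintype V] (G : SimpleGraph V) (c : V → ℝ) : ℝ :=
  sInf {t | ∃ x ∈ lpPoly G, t = ∑ v, c v * x v}

/-- Minimum cost of an integral vertex cover under cost `c`. -/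
noncomputable def ipVal {V : Type*} [Fintype V] [DecidableEq V]
    (G : SimpleGraph V) (c : V → ℝ) : ℝ :=
  sInf {t | ∃ S : Finset V, IsVC G ↑S ∧ t = ∑ v ∈ S, c v}

/-- Integrality gap of the vertex cover LP relaxation. -/
noncomputable def gap {V : Type*} [Fintype V] [DecidableEq V] (G : SimpleGraph V) : ℝ :=
  sSup {r | ∃ c : V → ℝ, (∀ v, 0 ≤ c v) ∧ 0 < lpVal G c ∧ r = ipVal G c / lpVal G c}

noncomputable def dd (a : ℝ) : ℝ :=
  if a = 0 ∨ a = 1/2 ∨ a = 1 then 0 else if a < 1/2 then -1 else 1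

lemma dd_cases (a : ℝ) : dd a = -1 ∨ dd a = 0 ∨ dd a = 1 := by
  unfold dd; split_ifs <;> simp

lemma dd_zero : dd 0 = 0 := by unfold dd; simp

lemma dd_ne_zero {a : ℝ} (h0 : a ≠ 0) (h2 : a ≠ 1/2) (h1 : a ≠ 1) : dd a ≠ 0 := by
  unfold dd
  split_ifs with h h'
  · tauto
  · norm_num
  · norm_num

lemma dd_sum {a b : ℝ} (ha : 0 ≤ a) (hb : 0 ≤ b) (hab : a + b = 1) :
    dd a + dd b = 0 := by
  obtain rfl : b = 1 - a := by linarith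
  by_cases h1 : a = 0 ∨ a = 1/2 ∨ a = 1
  · have h2 : (1-a) = 0 ∨ (1-a) = 1/2 ∨ (1-a) = 1 := by
      rcases h1 with rfl | rfl | rfl <;> norm_num
    simp only [dd, if_pos h1, if_pos h2]; norm_num
  · push_neg at h1
    obtain ⟨e0, e2, e1⟩ := h1
    have h2 : ¬((1-a) = 0 ∨ (1-a) = 1/2 ∨ (1-a) = 1) := by
      rintro (h | h | h)
      · exact e1 (by linarith)
      · exact e2 (by linarith)
      · exact e0 (by linarith)
    simp only [dd, if_neg (by push_neg; exact ⟨e0, e2, e1⟩ :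
      ¬(a = 0 ∨ a = 1/2 ∨ a = 1)), if_neg h2]
    rcases lt_trichotomy a (1/2) with h | h | h
    · rw [if_pos h, if_neg (by intro h'; linarith : ¬(1-a < 1/2))]; ring
    · exact absurd h e2
    · rw [if_neg (by intro h'; linarith : ¬(a < 1/2)),
        if_pos (by linarith : (1:ℝ)-a < 1/2)]; ring

/-- Nemhauser–Trotter half-integrality: every extreme point of the vertex cover LP
polyhedron has all coordinates in {0, 1/2, 1}. -/
theorem stmt0 {V : Type*} [Fintype V] (G : SimpleGraph V)
    (x : V → ℝ) (hx : x ∈ Set.extremePoints ℝ (lpPoly G)) :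
    ∀ v, x v = 0 ∨ x v = 1/2 ∨ x v = 1 := by
  intro v0
  by_contra hv0
  push_neg at hv0
  obtain ⟨h0, h2, h1⟩ := hv0
  obtain ⟨hmem, hext⟩ := hx
  obtain ⟨hnn, hedge⟩ := hmem
  have hdne : dd (x v0) ≠ 0 := dd_ne_zero h0 h2 h1
  -- positivity of coordinates where dd is nonzero
  have hdpos : ∀ v, dd (x v) ≠ 0 → 0 < x v := by
    intro v hv
    rcases lt_or_eq_of_le (hnn v) with h | h
    · exact h
    · exact absurd (by rw [← h, dd_zero]) hv
  have hne : Nonempty V := ⟨v0⟩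
  classical
  -- choose epsilon
  set f : V → ℝ := fun v => if 0 < x v then x v else 1 with hf
  set g : V × V → ℝ := fun p => if 1 < x p.1 + x p.2 then (x p.1 + x p.2 - 1)/2 else 1 with hg
  set ε : ℝ := min ((univ : Finset V).inf' univ_nonempty f)
      ((univ ×ˢ univ : Finset (V × V)).inf' (by simp) g) with hε
  have hεpos : 0 < ε := by
    apply lt_min
    · apply (Finset.lt_inf'_iff _).2
      intro v _
      simp only [hf]
      split_ifs with h
      · exact h
      · norm_num
    · apply (Finset.lt_inf'_iff _).2
      intro p _
      simp only [hg]
      split_ifs with h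
      · linarith
      · norm_num
  have hε1 : ∀ v, 0 < x v → ε ≤ x v := by
    intro v hv
    calc ε ≤ (univ : Finset V).inf' univ_nonempty f := min_le_left _ _
    _ ≤ f v := Finset.inf'_le _ (mem_univ v)
    _ = x v := by simp [hf, hv]
  have hε2 : ∀ u v, 1 < x u + x v → 2 * ε ≤ x u + x v - 1 := by
    intro u v huv
    have : ε ≤ g (u, v) := by
      calc ε ≤ _ := min_le_right _ _
      _ ≤ g (u, v) := Finset.inf'_le _ (by simp)
    simp only [hg, if_pos huv] at this
    linarith
  -- perturbed points
  set y : V → ℝ := fun v => x v + ε * dd (x v) with hy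
  set z : V → ℝ := fun v => x v - ε * dd (x v) with hz
  have key : ∀ v, ε * |dd (x v)| ≤ x v ∨ dd (x v) = 0 := by
    intro v
    by_cases h : dd (x v) = 0
    · exact Or.inr h
    · left
      have h1 : |dd (x v)| ≤ 1 := by
        rcases dd_cases (x v) with h' | h' | h' <;> rw [h'] <;> norm_num
      have := hε1 v (hdpos v h)
      nlinarith
  have hsum : ∀ ⦃u v⦄, G.Adj u v → |dd (x u) + dd (x v)| ≤ 2 ∧
      (x u + x v = 1 → dd (x u) + dd (x v) = 0) := by
    intro u v huv
    constructor
    · rcases dd_cases (x u) with h | h | h <;> rcases dd_cases (x v) with h' | h' | h' <;>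
        rw [h, h'] <;> norm_num
    · intro ht
      exact dd_sum (hnn u) (hnn v) ht
  have hylp : y ∈ lpPoly G := by
    constructor
    · intro v
      simp only [hy]
      rcases key v with h | h
      · have := neg_abs_le (dd (x v))
        nlinarith
      · rw [h]; simp [hnn v]
    · intro u v huv
      simp only [hy]
      rcases eq_or_lt_of_le (hedge huv) with ht | ht
      · rw [← add_assoc, add_assoc (x u), add_comm (ε * dd (x u)), ← add_assoc, ← ht]
        have := (hsum huv).2 ht.symm
        nlinarith
      · have h2 := hε2 u v ht
        have h3 := (hsum huv).1
        have := neg_abs_le (dd (x u) + dd (x v))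
        nlinarith
  have hzlp : z ∈ lpPoly G := by
    constructor
    · intro v
      simp only [hz]
      rcases key v with h | h
      · have := le_abs_self (dd (x v))
        nlinarith
      · rw [h]; simp [hnn v]
    · intro u v huv
      simp only [hz]
      rcases eq_or_lt_of_le (hedge huv) with ht | ht
      · have := (hsum huv).2 ht.symm
        nlinarith [ht.symm]
      · have h2 := hε2 u v ht
        have h3 := (hsum huv).1
        have := le_abs_self (dd (x u) + dd (x v))
        nlinarith
  have hseg : x ∈ openSegment ℝ y z := by
    refine ⟨1/2, 1/2, by norm_num, by norm_num, by norm_num, ?_⟩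
    funext v
    simp only [hy, hz, Pi.add_apply, Pi.smul_apply, smul_eq_mul]
    ring
  have := hext hylp hzlp hseg
  have hyv : y v0 = x v0 := by rw [this]
  simp only [hy] at hyv
  have : ε * dd (x v0) = 0 := by linarith
  rcases mul_eq_zero.1 this with h | h
  · exact absurd h (ne_of_gt hεpos)
  · exact hdne h
end

section
/- Let G be a finite graph with at least one edge, let x* be a half-integral point of P(G) with level sets V_0, V_{1/2}, V_1, let H = G[V_{1/2}], and let y* be an optimal fractional coloring of H with Σ_U y*_U = χ^f(H). Setting λ_U = y*_U/χ^f(H), the coordinatewise inequality (2 − 2/χ^f(G))·x* ≥ Σ_{U independent in H} λ_U · 1_{(V_{1/2}\U) ∪ V_1} holds. -/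
open Finset

lemma fracChromOn_nonneg {V : Type*} [Fintype V] [DecidableEq V]
    (G : SimpleGraph V) (s : Set V) : 0 ≤ fracChromOn G s := by
  apply Real.sInf_nonneg
  rintro t ⟨y, hy0, -, -, rfl⟩
  exact Finset.sum_nonneg fun U _ => hy0 U

lemma fracChrom_set_nonempty {V : Type*} [Fintype V] [DecidableEq V] (G : SimpleGraph V) :
    {t | ∃ y : Finset V → ℝ, (∀ U, 0 ≤ y U) ∧
      (∀ U, y U ≠ 0 → IsIndep G ↑U ∧ ↑U ⊆ (Set.univ : Set V)) ∧
      (∀ v ∈ (Set.univ : Set V), 1 ≤ ∑ U : Finset V, if v ∈ U then y U else 0) ∧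
      t = ∑ U : Finset V, y U}.Nonempty := by
  classical
  refine ⟨∑ U : Finset V, (if U.card = 1 then (1:ℝ) else 0),
    fun U => if U.card = 1 then (1:ℝ) else 0, ?_, ?_, ?_, rfl⟩
  · intro U; dsimp only; split_ifs <;> norm_num
  · intro U hU
    have hc : U.card = 1 := by by_contra h; exact hU (if_neg h)
    obtain ⟨a, rfl⟩ := Finset.card_eq_one.mp hc
    refine ⟨?_, Set.subset_univ _⟩
    intro u hu w hw
    simp only [Finset.coe_singleton, Set.mem_singleton_iff] at hu hw
    subst hu; subst hw; exact G.irrefl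
  · intro v _
    have := Finset.single_le_sum
      (f := fun U : Finset V => if v ∈ U then (if U.card = 1 then (1:ℝ) else 0) else 0)
      (fun U _ => by split_ifs <;> norm_num) (Finset.mem_univ ({v} : Finset V))
    simpa using this

lemma two_le_fracChrom {V : Type*} [Fintype V] [DecidableEq V] (G : SimpleGraph V)
    (hE : ∃ u v, G.Adj u v) : 2 ≤ fracChrom G := by
  classical
  rw [fracChrom, fracChromOn]
  apply le_csInf (fracChrom_set_nonempty G)
  rintro t ⟨y, hy0, hsupp, hcov, rfl⟩
  obtain ⟨u, v, huv⟩ := hE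
  have h1 := hcov u (Set.mem_univ u)
  have h2 := hcov v (Set.mem_univ v)
  have key : ∀ U : Finset V,
      (if u ∈ U then y U else 0) + (if v ∈ U then y U else 0) ≤ y U := by
    intro U
    by_cases hy : y U = 0
    · simp [hy]
    · have hind := (hsupp U hy).1
      split_ifs with h h' h'
      · exact absurd huv (hind h h')
      · linarith [hy0 U]
      · linarith [hy0 U]
      · linarith [hy0 U]
  calc (2:ℝ) ≤ (∑ U : Finset V, if u ∈ U then y U else 0)
      + (∑ U : Finset V, if v ∈ U then y U else 0) := by linarith
    _ = ∑ U : Finset V, ((if u ∈ U then y U else 0) + (if v ∈ U then y U else 0)) := by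
        rw [Finset.sum_add_distrib]
    _ ≤ ∑ U : Finset V, y U := Finset.sum_le_sum fun U _ => key U

lemma fracChromOn_le_fracChrom {V : Type*} [Fintype V] [DecidableEq V]
    (G : SimpleGraph V) (s : Set V) : fracChromOn G s ≤ fracChrom G := by
  classical
  rw [fracChrom, fracChromOn]
  apply le_csInf (fracChrom_set_nonempty G)
  rintro t ⟨y, hy0, hsupp, hcov, rfl⟩
  set sf : Finset V := (Set.toFinite s).toFinset with hsf
  have hmemsf : ∀ a, a ∈ sf ↔ a ∈ s := fun a => Set.Finite.mem_toFinset _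
  set y' : Finset V → ℝ := fun U => ∑ W : Finset V, if W ∩ sf = U then y W else 0 with hy'
  have hbdd : BddBelow {t | ∃ y : Finset V → ℝ, (∀ U, 0 ≤ y U) ∧
      (∀ U, y U ≠ 0 → IsIndep G ↑U ∧ ↑U ⊆ s) ∧
      (∀ v ∈ s, 1 ≤ ∑ U : Finset V, if v ∈ U then y U else 0) ∧
      t = ∑ U : Finset V, y U} := by
    refine ⟨0, ?_⟩
    rintro t ⟨z, hz0, -, -, rfl⟩
    exact Finset.sum_nonneg fun U _ => hz0 U
  apply csInf_le hbdd
  refine ⟨y', ?_, ?_, ?_, ?_⟩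
  · intro U
    exact Finset.sum_nonneg fun W _ => by split_ifs <;> [exact hy0 W; exact le_rfl]
  · intro U hU
    obtain ⟨W, -, hW⟩ := Finset.exists_ne_zero_of_sum_ne_zero hU
    by_cases h' : W ∩ sf = U
    · subst h'
      have hyW : y W ≠ 0 := by simpa using hW
      have hindW := (hsupp W hyW).1
      constructor
      · intro a ha b hb
        have ha' : a ∈ (W : Set V) := by
          simp only [Finset.coe_inter, Set.mem_inter_iff] at ha; exact ha.1
        have hb' : b ∈ (W : Set V) := by
          simp only [Finset.coe_inter, Set.mem_inter_iff] at hb; exact hb.1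
        exact hindW ha' hb'
      · intro a ha
        simp only [Finset.coe_inter, Set.mem_inter_iff, Finset.mem_coe] at ha
        exact (hmemsf a).mp ha.2
    · exact absurd (if_neg h') hW
  · intro v hv
    have hvsf : v ∈ sf := (hmemsf v).mpr hv
    have key : ∀ U : Finset V,
        (if v ∈ U then y' U else 0)
          = ∑ W : Finset V, if W ∩ sf = U then (if v ∈ U then y W else 0) else 0 := by
      intro U
      rw [hy']
      split_ifs with h <;> simp [h]
    calc (1:ℝ) ≤ ∑ W : Finset V, if v ∈ W then y W else 0 := hcov v (Set.mem_univ v)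
      _ = ∑ U : Finset V, if v ∈ U then y' U else 0 := by
          simp only [key]
          rw [Finset.sum_comm]
          apply Finset.sum_congr rfl
          intro W _
          rw [Finset.sum_ite_eq]
          simp [Finset.mem_inter, hvsf]
  · rw [hy']
    rw [Finset.sum_comm]
    apply Finset.sum_congr rfl
    intro W _
    rw [Finset.sum_ite_eq]
    simp

/-- Key coordinatewise domination inequality: the convex combination of the indicator
vectors of the vertex covers `(V_{1/2} \ U) ∪ V_1`, with weights `y U / χ^f(H)` coming
from an optimal fractional coloring `y` of `H = G[V_{1/2}]`, is at most
`(2 - 2/χ^f(G)) · x` coordinatewise. -/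
theorem stmt4 {V : Type*} [Fintype V] [DecidableEq V] (G : SimpleGraph V)
    (hE : ∃ u v, G.Adj u v)
    (x : V → ℝ) (hx : x ∈ lpPoly G)
    (hhalf : ∀ v, x v = 0 ∨ x v = 1/2 ∨ x v = 1)
    (y : Finset V → ℝ) (hy0 : ∀ U, 0 ≤ y U)
    (hysupp : ∀ U, y U ≠ 0 → IsIndep G ↑U ∧ (↑U : Set V) ⊆ {v | x v = 1/2})
    (hycover : ∀ v ∈ {v | x v = 1/2}, 1 ≤ ∑ U : Finset V, if v ∈ U then y U else 0)
    (hyopt : ∑ U : Finset V, y U = fracChromOn G {v | x v = 1/2}) :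
    ∀ v, ∑ U : Finset V,
        (y U / fracChromOn G {v | x v = 1/2}) *
          Set.indicator (({v | x v = 1/2} \ ↑U) ∪ {v | x v = 1}) (fun _ => (1 : ℝ)) v
      ≤ (2 - 2 / fracChrom G) * x v := by
  classical
  intro v
  set S : Set V := {v | x v = 1/2} with hSdef
  set χH := fracChromOn G S with hχHdef
  set χG := fracChrom G with hχGdef
  have hχG2 : 2 ≤ χG := two_le_fracChrom G hE
  have hχGpos : 0 < χG := by linarith
  have hχH0 : 0 ≤ χH := fracChromOn_nonneg G S
  have hHG : χH ≤ χG := fracChromOn_le_fracChrom G S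
  have hdiv : 2 / χG ≤ 1 := by rw [div_le_one hχGpos]; linarith
  rcases hhalf v with h0 | hhalf' | h1
  · -- x v = 0
    have hnot : ∀ U : Finset V,
        Set.indicator ((S \ ↑U) ∪ {v | x v = 1}) (fun _ => (1:ℝ)) v = 0 := by
      intro U
      apply Set.indicator_of_notMem
      rintro (⟨hv, -⟩ | hv)
      · simp only [hSdef, Set.mem_setOf_eq] at hv; rw [h0] at hv; norm_num at hv
      · simp only [Set.mem_setOf_eq] at hv; rw [h0] at hv; norm_num at hv
    simp only [hnot, mul_zero, Finset.sum_const_zero, h0]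
    exact le_rfl
  · -- x v = 1/2
    have hvS : v ∈ S := hhalf'
    have hind : ∀ U : Finset V,
        Set.indicator ((S \ ↑U) ∪ {v | x v = 1}) (fun _ => (1:ℝ)) v
          = if v ∈ U then 0 else 1 := by
      intro U
      by_cases hU : v ∈ U
      · rw [if_pos hU]
        apply Set.indicator_of_notMem
        rintro (⟨-, hv⟩ | hv)
        · exact hv (Finset.mem_coe.mpr hU)
        · simp only [Set.mem_setOf_eq] at hv; rw [hhalf'] at hv; norm_num at hv
      · rw [if_neg hU]
        apply Set.indicator_of_mem
        exact Or.inl ⟨hvS, fun h => hU (Finset.mem_coe.mp h)⟩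
    have hc1 : 1 ≤ ∑ U : Finset V, if v ∈ U then y U else 0 := hycover v hvS
    have hcle : (∑ U : Finset V, if v ∈ U then y U else 0) ≤ χH := by
      rw [← hyopt]
      exact Finset.sum_le_sum fun U _ => by split_ifs <;> [exact le_rfl; exact hy0 U]
    have hχH1 : 1 ≤ χH := le_trans hc1 hcle
    have hχHpos : 0 < χH := by linarith
    set c := ∑ U : Finset V, if v ∈ U then y U else 0 with hcdef
    have hsum : ∑ U : Finset V, (y U / χH) * (if v ∈ U then (0:ℝ) else 1)
        = (χH - c) / χH := by
      have hterm : ∀ U : Finset V, (y U / χH) * (if v ∈ U then (0:ℝ) else 1)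
          = (y U - (if v ∈ U then y U else 0)) / χH := by
        intro U; split_ifs <;> ring
      rw [Finset.sum_congr rfl fun U _ => hterm U, ← Finset.sum_div,
        Finset.sum_sub_distrib, hyopt, ← hcdef]
    simp only [hind]
    rw [hsum, hhalf']
    have h1χ : 1 / χG ≤ 1 / χH := one_div_le_one_div_of_le hχHpos hHG
    calc (χH - c) / χH ≤ (χH - 1) / χH :=
          (div_le_div_iff_of_pos_right hχHpos).mpr (by linarith)
      _ = 1 - 1 / χH := by
          rw [sub_div, div_self (ne_of_gt hχHpos)]
      _ ≤ 1 - 1 / χG := by linarith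
      _ = (2 - 2 / χG) * (1 / 2) := by ring
  · -- x v = 1
    have hind : ∀ U : Finset V,
        Set.indicator ((S \ ↑U) ∪ {v | x v = 1}) (fun _ => (1:ℝ)) v = 1 := by
      intro U
      exact Set.indicator_of_mem (Set.mem_union_right _ (show v ∈ {v | x v = 1} from h1)) (fun _ => (1:ℝ))
    simp only [hind, mul_one]
    rw [← Finset.sum_div, hyopt, h1, mul_one]
    rcases eq_or_lt_of_le hχH0 with h | h
    · rw [← h, div_zero]; linarith
    · rw [div_self (ne_of_gt h)]; linarith
end

section
/- For every finite graph G with at least one edge and every nonnegative cost function c on V, the minimum cost of an (integral) vertex cover is at most (2 − 2/χ^f(G)) times the optimal value of the LP relaxation min{c^T x : x ∈ P(G)}. -/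
open Finset MeasureTheory Filter Topology

lemma int_piece1 (a C : ℝ) (ha : 0 ≤ a) :
    ∫ t in Set.Ioc (0:ℝ) (1/2), (if t ≤ a then C else 0) = min a (1/2) * C := by
  have h1 : (fun t : ℝ => if t ≤ a then C else 0) = Set.indicator (Set.Iic a) (fun _ => C) := by
    funext t; simp [Set.indicator, Set.mem_Iic]
  rw [h1, integral_indicator_const _ measurableSet_Iic, measureReal_def,
    Measure.restrict_apply measurableSet_Iic]
  have h2 : Set.Iic a ∩ Set.Ioc (0:ℝ) (1/2) = Set.Ioc 0 (min a (1/2)) := by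
    ext t
    simp only [Set.mem_inter_iff, Set.mem_Iic, Set.mem_Ioc, le_min_iff]
    constructor
    · rintro ⟨h, h0, h12⟩; exact ⟨h0, h, h12⟩
    · rintro ⟨h0, h, h12⟩; exact ⟨h, h0, h12⟩
  rw [h2, Real.volume_Ioc, smul_eq_mul]
  rw [ENNReal.toReal_ofReal (by simp [le_min_iff]; exact ha)]
  ring

lemma int_piece2 (a C : ℝ) (ha1 : a ≤ 1) :
    ∫ t in Set.Ioc (0:ℝ) (1/2), (if 1 - t ≤ a then C else 0) = max 0 (a - 1/2) * C := by
  have h1 : (fun t : ℝ => if 1 - t ≤ a then C else 0)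
      = Set.indicator (Set.Ici (1 - a)) (fun _ => C) := by
    funext t; simp only [Set.indicator, Set.mem_Ici]
    by_cases h : 1 - t ≤ a
    · rw [if_pos h, if_pos (by linarith)]
    · rw [if_neg h, if_neg (by intro h'; exact h (by linarith))]
  rw [h1, integral_indicator_const _ measurableSet_Ici, measureReal_def,
    Measure.restrict_apply measurableSet_Ici, smul_eq_mul]
  have hvol : volume (Set.Ici (1 - a) ∩ Set.Ioc (0:ℝ) (1/2)) = ENNReal.ofReal (a - 1/2) := by
    rcases eq_or_lt_of_le (by linarith : (0:ℝ) ≤ 1 - a) with h0 | h0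
    · have hs : Set.Ici (1 - a) ∩ Set.Ioc (0:ℝ) (1/2) = Set.Ioc 0 (1/2) := by
        rw [← h0]; ext t; simp only [Set.mem_inter_iff, Set.mem_Ici, Set.mem_Ioc]
        constructor
        · rintro ⟨_, h⟩; exact h
        · rintro ⟨h1, h2⟩; exact ⟨le_of_lt h1, h1, h2⟩
      rw [hs, Real.volume_Ioc]
      congr 1; linarith
    · have hs : Set.Ici (1 - a) ∩ Set.Ioc (0:ℝ) (1/2) = Set.Icc (1 - a) (1/2) := by
        ext t; simp only [Set.mem_inter_iff, Set.mem_Ici, Set.mem_Ioc, Set.mem_Icc]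
        constructor
        · rintro ⟨h, _, h2⟩; exact ⟨h, h2⟩
        · rintro ⟨h1, h2⟩; exact ⟨h1, lt_of_lt_of_le h0 h1, h2⟩
      rw [hs, Real.volume_Icc]
      congr 1; ring
  rw [hvol, ENNReal.toReal_ofReal', max_comm]

lemma intg_piece1 (a C : ℝ) :
    IntegrableOn (fun t : ℝ => if t ≤ a then C else 0) (Set.Ioc 0 (1/2)) := by
  have h1 : (fun t : ℝ => if t ≤ a then C else 0) = Set.indicator (Set.Iic a) (fun _ => C) := by
    funext t; simp [Set.indicator, Set.mem_Iic]
  rw [h1]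
  exact (integrableOn_const (by simp [Real.volume_Ioc])).indicator measurableSet_Iic

lemma intg_piece2 (a C : ℝ) :
    IntegrableOn (fun t : ℝ => if 1 - t ≤ a then C else 0) (Set.Ioc 0 (1/2)) := by
  have h1 : (fun t : ℝ => if 1 - t ≤ a then C else 0)
      = Set.indicator (Set.Ici (1 - a)) (fun _ => C) := by
    funext t; simp only [Set.indicator, Set.mem_Ici]
    by_cases h : 1 - t ≤ a
    · rw [if_pos h, if_pos (by linarith)]
    · rw [if_neg h, if_neg (by intro h'; exact h (by linarith))]
  rw [h1]
  exact (integrableOn_const (by simp [Real.volume_Ioc])).indicator measurableSet_Ici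

lemma pervertex {x s p : ℝ} (hx0 : 0 ≤ x) (hx1 : x ≤ 1) (hs : 2 ≤ s) (hp1 : 1 ≤ p)
    (hps : p ≤ s) :
    (s - p) * min x (1/2) + p * max 0 (x - 1/2) ≤ (s - 1) * x := by
  rcases le_or_gt x (1/2) with h | h
  · rw [min_eq_left h, max_eq_left (by linarith)]
    nlinarith
  · rw [min_eq_right (le_of_lt h), max_eq_right (by linarith)]
    nlinarith

lemma core {V : Type*} [Fintype V] [DecidableEq V] (G : SimpleGraph V)
    (c : V → ℝ) (hc : ∀ v, 0 ≤ c v)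
    (x : V → ℝ) (hx0 : ∀ v, 0 ≤ x v) (hx1 : ∀ v, x v ≤ 1)
    (hxE : ∀ ⦃u v⦄, G.Adj u v → 1 ≤ x u + x v)
    (y : Finset V → ℝ) (hy0 : ∀ U, 0 ≤ y U)
    (hyI : ∀ U, y U ≠ 0 → IsIndep G ↑U)
    (hycov : ∀ v, 1 ≤ ∑ U : Finset V, if v ∈ U then y U else 0)
    (hs2 : 2 ≤ ∑ U : Finset V, y U)
    (ε : ℝ) (hε : 0 < ε) :
    ∃ S : Finset V, IsVC G ↑S ∧
      ∑ v ∈ S, c v ≤ (2 - 2 / (∑ U : Finset V, y U)) * (∑ v, c v * x v) + ε := by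
  classical
  set s := ∑ U : Finset V, y U with hsdef
  set X := ∑ v, c v * x v with hXdef
  have hspos : 0 < s := by linarith
  set f : Finset V → V → ℝ → ℝ := fun U v t =>
    if v ∈ U then (if 1 - t ≤ x v then c v else 0) else (if t ≤ x v then c v else 0) with hfdef
  have hint : ∀ (U : Finset V) (v : V), IntegrableOn (f U v) (Set.Ioc 0 (1/2)) := by
    intro U v
    by_cases h : v ∈ U <;> simp only [hfdef, h, if_true, if_false]
    · exact intg_piece2 (x v) (c v)
    · exact intg_piece1 (x v) (c v)
  have hival : ∀ (U : Finset V) (v : V),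
      ∫ t in Set.Ioc (0:ℝ) (1/2), f U v t
        = (if v ∈ U then max 0 (x v - 1/2) else min (x v) (1/2)) * c v := by
    intro U v
    by_cases h : v ∈ U <;> simp only [hfdef, h, if_true, if_false]
    · exact int_piece2 (x v) (c v) (hx1 v)
    · exact int_piece1 (x v) (c v) (hx0 v)
  set g : ℝ → ℝ := fun t => ∑ U : Finset V, y U * ∑ v, f U v t with hgdef
  have hgint : IntegrableOn g (Set.Ioc 0 (1/2)) := by
    apply integrable_finset_sum
    intro U _
    exact (integrable_finset_sum _ (fun v _ => hint U v)).const_mul (y U)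
  have hgval : ∫ t in Set.Ioc (0:ℝ) (1/2), g t
      = ∑ U : Finset V, y U *
          ∑ v, (if v ∈ U then max 0 (x v - 1/2) else min (x v) (1/2)) * c v := by
    rw [integral_finset_sum _ (fun U _ =>
      (integrable_finset_sum _ (fun v _ => hint U v)).const_mul (y U))]
    refine Finset.sum_congr rfl (fun U _ => ?_)
    rw [MeasureTheory.integral_const_mul, integral_finset_sum _ (fun v _ => hint U v)]
    congr 1
    exact Finset.sum_congr rfl (fun v _ => hival U v)
  -- bound the integral
  have hbound : ∑ U : Finset V, y U *
      ∑ v, (if v ∈ U then max 0 (x v - 1/2) else min (x v) (1/2)) * c v ≤ (s - 1) * X := by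
    have hswap : ∑ U : Finset V, y U *
        ∑ v, (if v ∈ U then max 0 (x v - 1/2) else min (x v) (1/2)) * c v
        = ∑ v, ∑ U : Finset V,
            y U * ((if v ∈ U then max 0 (x v - 1/2) else min (x v) (1/2)) * c v) := by
      rw [Finset.sum_comm]
      exact Finset.sum_congr rfl (fun U _ => Finset.mul_sum _ _ _)
    rw [hswap, hXdef, Finset.mul_sum]
    apply Finset.sum_le_sum
    intro v _
    set p := ∑ U : Finset V, if v ∈ U then y U else 0 with hpdef
    set q := ∑ U : Finset V, if v ∈ U then 0 else y U with hqdef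
    have hpq : p + q = s := by
      rw [hpdef, hqdef, ← Finset.sum_add_distrib]
      exact Finset.sum_congr rfl (fun U _ => by by_cases h : v ∈ U <;> simp [h])
    have hterm : ∀ U : Finset V,
        y U * ((if v ∈ U then max 0 (x v - 1/2) else min (x v) (1/2)) * c v)
        = c v * (max 0 (x v - 1/2) * (if v ∈ U then y U else 0)
            + min (x v) (1/2) * (if v ∈ U then 0 else y U)) := by
      intro U; by_cases h : v ∈ U <;> simp only [h, if_true, if_false] <;> ring
    rw [Finset.sum_congr rfl (fun U _ => hterm U), ← Finset.mul_sum, Finset.sum_add_distrib,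
      ← Finset.mul_sum, ← Finset.mul_sum, ← hpdef, ← hqdef]
    have hp1 : 1 ≤ p := hycov v
    have hps : p ≤ s := by
      have hq0 : 0 ≤ q := Finset.sum_nonneg (fun U _ => by
        by_cases h : v ∈ U <;> simp [h, hy0 U])
      linarith
    have hq : q = s - p := by linarith
    rw [hq]
    have hmain := pervertex (hx0 v) (hx1 v) hs2 hp1 hps
    calc c v * (max 0 (x v - 1/2) * p + min (x v) (1/2) * (s - p))
        ≤ c v * ((s - 1) * x v) := by
          apply mul_le_mul_of_nonneg_left _ (hc v)
          linarith
      _ = (s - 1) * (c v * x v) := by ring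
  -- find a good t
  have hX0 : 0 ≤ X := Finset.sum_nonneg (fun v _ => mul_nonneg (hc v) (hx0 v))
  set B : ℝ := 2 * (s - 1) * X + s * ε with hBdef
  have hex_t : ∃ t ∈ Set.Ioc (0:ℝ) (1/2), g t < B := by
    by_contra h
    push_neg at h
    have hge := setIntegral_ge_of_const_le measurableSet_Ioc
      (by simp [Real.volume_Ioc] : volume (Set.Ioc (0:ℝ) (1/2)) ≠ ⊤) h hgint
    rw [measureReal_def, Real.volume_Ioc] at hge
    have : (ENNReal.ofReal (1/2 - 0)).toReal = 1/2 := by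
      rw [ENNReal.toReal_ofReal (by norm_num)]; norm_num
    rw [this, smul_eq_mul] at hge
    have h2 : ∫ t in Set.Ioc (0:ℝ) (1/2), g t ≤ (s - 1) * X := hgval ▸ hbound
    nlinarith
  obtain ⟨t, ht, hgt⟩ := hex_t
  -- find a good U
  have hex_U : ∃ U : Finset V, y U ≠ 0 ∧ ∑ v, f U v t ≤ B / s := by
    by_contra h
    push_neg at h
    have hge : ∀ U : Finset V, y U * (B / s) ≤ y U * ∑ v, f U v t := by
      intro U
      by_cases hU : y U = 0
      · simp [hU]
      · exact mul_le_mul_of_nonneg_left (le_of_lt (h U hU)) (hy0 U)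
    have : B ≤ g t := by
      calc B = s * (B / s) := by field_simp
        _ = ∑ U : Finset V, y U * (B / s) := by rw [← Finset.sum_mul]
        _ ≤ ∑ U : Finset V, y U * ∑ v, f U v t := Finset.sum_le_sum (fun U _ => hge U)
        _ = g t := rfl
    linarith
  obtain ⟨U, hyU, hcost⟩ := hex_U
  have hUind : IsIndep G ↑U := hyI U hyU
  refine ⟨Finset.univ.filter (fun v => if v ∈ U then 1 - t ≤ x v else t ≤ x v), ?_, ?_⟩
  · -- vertex cover
    intro u v huv
    have hsum := hxE huv
    have ht2 : t ≤ 1/2 := ht.2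
    by_cases hu : u ∈ U <;> by_cases hv : v ∈ U
    · exact absurd huv (hUind (Finset.mem_coe.2 hu) (Finset.mem_coe.2 hv))
    · rcases le_or_gt t (x v) with h | h
      · right
        simp only [Finset.coe_filter, Set.mem_setOf_eq, Finset.mem_univ, true_and]
        rw [if_neg hv]; exact h
      · left
        simp only [Finset.coe_filter, Set.mem_setOf_eq, Finset.mem_univ, true_and]
        rw [if_pos hu]; linarith
    · rcases le_or_gt t (x u) with h | h
      · left
        simp only [Finset.coe_filter, Set.mem_setOf_eq, Finset.mem_univ, true_and]
        rw [if_neg hu]; exact h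
      · right
        simp only [Finset.coe_filter, Set.mem_setOf_eq, Finset.mem_univ, true_and]
        rw [if_pos hv]; linarith
    · rcases le_or_gt t (x u) with h | h
      · left
        simp only [Finset.coe_filter, Set.mem_setOf_eq, Finset.mem_univ, true_and]
        rw [if_neg hu]; exact h
      · right
        simp only [Finset.coe_filter, Set.mem_setOf_eq, Finset.mem_univ, true_and]
        rw [if_neg hv]; linarith
  · -- cost bound
    have hfs : ∑ v ∈ Finset.univ.filter (fun v => if v ∈ U then 1 - t ≤ x v else t ≤ x v), c v
        = ∑ v, f U v t := by
      rw [Finset.sum_filter]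
      refine Finset.sum_congr rfl (fun v _ => ?_)
      by_cases h : v ∈ U <;> simp [hfdef, h]
    rw [hfs]
    have hBs : B / s = (2 - 2 / s) * X + ε := by
      field_simp
      ring
    linarith [hBs ▸ hcost]

/-- Upper bound direction: the minimum cost of an integral vertex cover is at most
`(2 - 2/χ^f(G))` times the optimal LP value. -/
theorem stmt5 {V : Type*} [Fintype V] [DecidableEq V] (G : SimpleGraph V)
    (hE : ∃ u v, G.Adj u v)
    (c : V → ℝ) (hc : ∀ v, 0 ≤ c v) :
    ipVal G c ≤ (2 - 2 / fracChrom G) * lpVal G c := by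
  classical
  obtain ⟨u0, v0, huv0⟩ := hE
  set Sχ : Set ℝ := {t | ∃ y : Finset V → ℝ, (∀ U, 0 ≤ y U) ∧
    (∀ U, y U ≠ 0 → IsIndep G (↑U : Set V) ∧ (↑U : Set V) ⊆ Set.univ) ∧
    (∀ v ∈ Set.univ, 1 ≤ ∑ U : Finset V, if v ∈ U then y U else 0) ∧
    t = ∑ U : Finset V, y U} with hSχdef
  have hχeq : fracChrom G = sInf Sχ := rfl
  set SL : Set ℝ := {t | ∃ x ∈ lpPoly G, t = ∑ v, c v * x v} with hSLdef
  have hLeq : lpVal G c = sInf SL := rfl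
  -- Sχ nonempty
  have hSχne : Sχ.Nonempty := by
    refine ⟨∑ U : Finset V, (if U.card = 1 then (1:ℝ) else 0),
      fun U => if U.card = 1 then (1:ℝ) else 0, ?_, ?_, ?_, rfl⟩
    · intro U; dsimp only; split <;> norm_num
    · intro U hU
      have hc1 : U.card = 1 := by by_contra h; exact hU (by simp [h])
      obtain ⟨v, rfl⟩ := Finset.card_eq_one.1 hc1
      refine ⟨?_, Set.subset_univ _⟩
      intro a ha b hb hadj
      simp only [Finset.coe_singleton, Set.mem_singleton_iff] at ha hb
      subst ha; subst hb
      exact G.loopless.irrefl _ hadj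
    · intro v _
      have := Finset.single_le_sum
        (f := fun U : Finset V => if v ∈ U then (if U.card = 1 then (1:ℝ) else 0) else 0)
        (fun U _ => by split <;> [skip; norm_num] <;> split <;> norm_num)
        (Finset.mem_univ ({v} : Finset V))
      simpa using this
  -- all elements of Sχ are ≥ 2
  have hel2 : ∀ r ∈ Sχ, (2:ℝ) ≤ r := by
    rintro r ⟨y, hy0, hyIs, hycov, rfl⟩
    have hle : ∀ U : Finset V,
        (if u0 ∈ U then y U else 0) + (if v0 ∈ U then y U else 0) ≤ y U := by
      intro U
      by_cases hU : y U = 0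
      · simp [hU]
      · have hind := (hyIs U hU).1
        by_cases h1 : u0 ∈ U <;> by_cases h2 : v0 ∈ U
        · exact absurd huv0 (hind (Finset.mem_coe.2 h1) (Finset.mem_coe.2 h2))
        · simp [h1, h2, hy0 U]
        · simp [h1, h2, hy0 U]
        · simp [h1, h2, hy0 U]
    calc (2:ℝ) = 1 + 1 := by norm_num
      _ ≤ (∑ U : Finset V, if u0 ∈ U then y U else 0)
          + (∑ U : Finset V, if v0 ∈ U then y U else 0) :=
            add_le_add (hycov u0 (Set.mem_univ _)) (hycov v0 (Set.mem_univ _))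
      _ = ∑ U : Finset V, ((if u0 ∈ U then y U else 0) + (if v0 ∈ U then y U else 0)) :=
            Finset.sum_add_distrib.symm
      _ ≤ ∑ U : Finset V, y U := Finset.sum_le_sum (fun U _ => hle U)
  have hSχbdd : BddBelow Sχ := ⟨2, fun r hr => hel2 r hr⟩
  have hχ2 : 2 ≤ fracChrom G := hχeq ▸ le_csInf hSχne hel2
  -- SL nonempty and bounded below
  have hSLne : SL.Nonempty :=
    ⟨∑ v, c v * (1:ℝ), fun _ => 1, ⟨fun _ => zero_le_one, fun u v _ => by norm_num⟩, rfl⟩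
  have hSLbdd : BddBelow SL := by
    refine ⟨0, ?_⟩
    rintro t ⟨x, hx, rfl⟩
    exact Finset.sum_nonneg (fun v _ => mul_nonneg (hc v) (hx.1 v))
  obtain ⟨a, -, ha, haS⟩ := exists_seq_tendsto_sInf hSχne hSχbdd
  obtain ⟨b, -, hb, hbS⟩ := exists_seq_tendsto_sInf hSLne hSLbdd
  rw [hχeq, hLeq]
  have key : ∀ n : ℕ, ipVal G c ≤ (2 - 2 / a n) * b n + 1 / ((n:ℝ) + 1) := by
    intro n
    obtain ⟨y, hy0, hyIs, hycov, hay⟩ := haS n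
    obtain ⟨x0, hx0mem, hbx⟩ := hbS n
    have han2 : 2 ≤ a n := hel2 _ (haS n)
    set x : V → ℝ := fun v => min (x0 v) 1 with hxdef
    have hx0' : ∀ v, 0 ≤ x v := fun v => le_min (hx0mem.1 v) zero_le_one
    have hx1' : ∀ v, x v ≤ 1 := fun v => min_le_right _ _
    have hxE : ∀ ⦃u v⦄, G.Adj u v → 1 ≤ x u + x v := by
      intro u v h
      have h1 := hx0mem.2 h
      have h2 := hx0mem.1 u
      have h3 := hx0mem.1 v
      simp only [hxdef]
      rcases le_total (x0 u) 1 with h4 | h4 <;> rcases le_total (x0 v) 1 with h5 | h5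
      · rw [min_eq_left h4, min_eq_left h5]; linarith
      · rw [min_eq_left h4, min_eq_right h5]; linarith
      · rw [min_eq_right h4, min_eq_left h5]; linarith
      · rw [min_eq_right h4, min_eq_right h5]; linarith
    obtain ⟨S, hSVC, hScost⟩ := core G c hc x hx0' hx1' hxE y hy0
      (fun U h => (hyIs U h).1) (fun v => hycov v (Set.mem_univ v))
      (by rw [← hay]; exact han2) (1 / ((n:ℝ) + 1)) (by positivity)
    have hipb : ipVal G c ≤ ∑ v ∈ S, c v := by
      apply csInf_le
      · refine ⟨0, ?_⟩
        rintro t ⟨T, _, rfl⟩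
        exact Finset.sum_nonneg (fun v _ => hc v)
      · exact ⟨S, hSVC, rfl⟩
    have hXb : ∑ v, c v * x v ≤ b n := by
      rw [hbx]
      exact Finset.sum_le_sum (fun v _ => mul_le_mul_of_nonneg_left (min_le_left _ _) (hc v))
    have hcoef : 0 ≤ 2 - 2 / a n := by
      have h1 : 2 / a n ≤ 1 := by
        rw [div_le_one (by linarith)]; linarith
      linarith
    calc ipVal G c ≤ ∑ v ∈ S, c v := hipb
      _ ≤ (2 - 2 / (∑ U : Finset V, y U)) * (∑ v, c v * x v) + 1 / ((n:ℝ) + 1) := hScost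
      _ = (2 - 2 / a n) * (∑ v, c v * x v) + 1 / ((n:ℝ) + 1) := by rw [← hay]
      _ ≤ (2 - 2 / a n) * b n + 1 / ((n:ℝ) + 1) := by
          have := mul_le_mul_of_nonneg_left hXb hcoef
          linarith
  have hχ0 : sInf Sχ ≠ 0 := by
    rw [← hχeq]; intro h; rw [h] at hχ2; linarith
  have hlim : Tendsto (fun n : ℕ => (2 - 2 / a n) * b n + 1 / ((n:ℝ) + 1)) atTop
      (𝓝 ((2 - 2 / sInf Sχ) * sInf SL + 0)) := by
    exact ((tendsto_const_nhds.sub (tendsto_const_nhds.div ha hχ0)).mul hb).add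
      tendsto_one_div_add_atTop_nhds_zero_nat
  have := ge_of_tendsto hlim (Filter.Eventually.of_forall key)
  linarith
end

section
/- The integrality gap of the vertex cover LP relaxation for a finite graph G with at least one edge equals 2 − 2/χ^f(G), i.e., ρ(G) = sup over nonnegative cost functions c (with positive LP value) of (min integral vertex cover cost)/(min LP cost) = 2 − 2/χ^f(G). -/
open Finset

/-! ### Auxiliary definitions and lemmas -/

section Aux
set_option linter.unusedSectionVars false

variable {V : Type*} [Fintype V] [DecidableEq V]

/-- The feasible-value set of the fractional chromatic LP (on the whole vertex set). -/
def fcSet (G : SimpleGraph V) : Set ℝ :=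
  {t | ∃ y : Finset V → ℝ, (∀ U, 0 ≤ y U) ∧
    (∀ U, y U ≠ 0 → IsIndep G ↑U ∧ ↑U ⊆ (Set.univ : Set V)) ∧
    (∀ v ∈ (Set.univ : Set V), 1 ≤ ∑ U : Finset V, if v ∈ U then y U else 0) ∧
    t = ∑ U : Finset V, y U}

lemma fracChrom_eq (G : SimpleGraph V) : fracChrom G = sInf (fcSet G) := rfl

/-- The set whose supremum defines `gap`. -/
def gapSet (G : SimpleGraph V) : Set ℝ :=
  {r | ∃ c : V → ℝ, (∀ v, 0 ≤ c v) ∧ 0 < lpVal G c ∧ r = ipVal G c / lpVal G c}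

lemma gap_eq (G : SimpleGraph V) : gap G = sSup (gapSet G) := rfl

lemma card_mem_fcSet (G : SimpleGraph V) : (Fintype.card V : ℝ) ∈ fcSet G := by
  refine ⟨fun U => if U.card = 1 then (1:ℝ) else 0, fun U => by positivity, ?_, ?_, ?_⟩
  · intro U hU
    have hcard : U.card = 1 := by by_contra h; simp [h] at hU
    obtain ⟨a, rfl⟩ := Finset.card_eq_one.mp hcard
    refine ⟨?_, by simp⟩
    intro x hx y hy hadj
    simp only [Finset.coe_singleton, Set.mem_singleton_iff] at hx hy
    subst hx; subst hy; exact G.loopless.irrefl _ hadj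
  · intro v _
    have : ∀ U : Finset V,
        (if v ∈ U then (if U.card = 1 then (1:ℝ) else 0) else 0)
          = if U = {v} then 1 else 0 := by
      intro U
      by_cases h : U = {v}
      · subst h; simp
      · rcases Decidable.em (v ∈ U) with hv | hv
        · rcases Decidable.em (U.card = 1) with hc | hc
          · obtain ⟨a, rfl⟩ := Finset.card_eq_one.mp hc
            simp only [Finset.mem_singleton] at hv
            exact absurd (by rw [hv]) h
          · simp [hv, hc, h]
        · simp [hv, h]
    rw [Finset.sum_congr rfl (fun U _ => this U), Finset.sum_ite_eq' univ ({v} : Finset V)]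
    simp
  · have himg : (univ : Finset (Finset V)).filter (fun U => U.card = 1)
        = (univ : Finset V).image (fun v => ({v} : Finset V)) := by
      ext U
      simp [Finset.card_eq_one, eq_comm]
    rw [Finset.sum_boole]
    rw [himg, Finset.card_image_of_injective _ Finset.singleton_injective]
    simp

lemma fcSet_nonempty (G : SimpleGraph V) : (fcSet G).Nonempty :=
  ⟨_, card_mem_fcSet G⟩

lemma fcSet_ge_two (G : SimpleGraph V) (hE : ∃ u v, G.Adj u v) :
    ∀ t ∈ fcSet G, (2:ℝ) ≤ t := by
  obtain ⟨u, v, huv⟩ := hE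
  rintro t ⟨y, hy0, hysupp, hycov, rfl⟩
  have h1 := hycov u (Set.mem_univ u)
  have h2 := hycov v (Set.mem_univ v)
  have key : ∀ U : Finset V,
      (if u ∈ U then y U else 0) + (if v ∈ U then y U else 0) ≤ y U := by
    intro U
    split_ifs with hu hv hv
    · have : y U = 0 := by
        by_contra h
        exact (hysupp U h).1 (Finset.mem_coe.mpr hu) (Finset.mem_coe.mpr hv) huv
      simp [this]
    · linarith [hy0 U]
    · linarith [hy0 U]
    · linarith [hy0 U]
  calc (2:ℝ) ≤ (∑ U : Finset V, if u ∈ U then y U else 0)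
        + (∑ U : Finset V, if v ∈ U then y U else 0) := by linarith
    _ = ∑ U : Finset V, ((if u ∈ U then y U else 0) + (if v ∈ U then y U else 0)) :=
        Finset.sum_add_distrib.symm
    _ ≤ ∑ U : Finset V, y U := Finset.sum_le_sum fun U _ => key U

lemma fracChrom_ge_two (G : SimpleGraph V) (hE : ∃ u v, G.Adj u v) :
    2 ≤ fracChrom G := by
  rw [fracChrom_eq]
  exact le_csInf (fcSet_nonempty G) (fcSet_ge_two G hE)

/-! #### basic LP/IP value facts -/

lemma ipVal_le (G : SimpleGraph V) (c : V → ℝ) (hc : ∀ v, 0 ≤ c v)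
    (S : Finset V) (hS : IsVC G ↑S) : ipVal G c ≤ ∑ v ∈ S, c v := by
  apply csInf_le
  · refine ⟨0, ?_⟩
    rintro t ⟨T, _, rfl⟩
    exact Finset.sum_nonneg fun v _ => hc v
  · exact ⟨S, hS, rfl⟩

lemma ipVal_nonneg (G : SimpleGraph V) (c : V → ℝ) (hc : ∀ v, 0 ≤ c v) :
    0 ≤ ipVal G c := by
  apply le_csInf
  · exact ⟨∑ v ∈ (univ : Finset V), c v, univ, fun u v _ => Or.inl (mem_univ u), rfl⟩
  · rintro t ⟨T, _, rfl⟩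
    exact Finset.sum_nonneg fun v _ => hc v

lemma lpVal_le (G : SimpleGraph V) (c : V → ℝ) (hc : ∀ v, 0 ≤ c v)
    (x : V → ℝ) (hx : x ∈ lpPoly G) : lpVal G c ≤ ∑ v, c v * x v := by
  apply csInf_le
  · refine ⟨0, ?_⟩
    rintro t ⟨z, hz, rfl⟩
    exact Finset.sum_nonneg fun v _ => mul_nonneg (hc v) (hz.1 v)
  · exact ⟨x, hx, rfl⟩

lemma one_mem_lpPoly (G : SimpleGraph V) : (fun _ => (1:ℝ)) ∈ lpPoly G :=
  ⟨fun _ => zero_le_one, fun u v _ => by norm_num⟩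

lemma ipVal_le_two_lp (G : SimpleGraph V) (c : V → ℝ) (hc : ∀ v, 0 ≤ c v) :
    ipVal G c ≤ 2 * lpVal G c := by
  classical
  have key : ipVal G c / 2 ≤ lpVal G c := by
    refine le_csInf ⟨∑ v, c v * 1, ⟨fun _ => (1:ℝ), one_mem_lpPoly G, rfl⟩⟩ ?_
    rintro t ⟨x, hx, rfl⟩
    set S : Finset V := univ.filter (fun v => 1/2 ≤ x v) with hS
    have hmem : ∀ v, v ∈ S ↔ 1/2 ≤ x v := by
      intro v
      simp [hS]
    have hvc : IsVC G ↑S := by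
      intro a b hab
      have hsum := hx.2 hab
      rcases le_total (1/2 : ℝ) (x a) with h | h
      · exact Or.inl (Finset.mem_coe.mpr ((hmem a).mpr h))
      · exact Or.inr (Finset.mem_coe.mpr ((hmem b).mpr (by linarith)))
    have h1 : ipVal G c ≤ ∑ v ∈ S, c v := ipVal_le G c hc S hvc
    have h2 : ∑ v ∈ S, c v ≤ ∑ v ∈ S, 2 * (c v * x v) := by
      refine Finset.sum_le_sum ?_
      intro v hv
      have hxv : 1/2 ≤ x v := (hmem v).mp hv
      nlinarith [hc v]
    have h3 : ∑ v ∈ S, 2 * (c v * x v) ≤ ∑ v, 2 * (c v * x v) := by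
      refine Finset.sum_le_sum_of_subset_of_nonneg (Finset.subset_univ S) ?_
      intro v _ _
      have := mul_nonneg (hc v) (hx.1 v)
      linarith
    have h4 : ∑ v, 2 * (c v * x v) = 2 * ∑ v, c v * x v := by
      rw [Finset.mul_sum]
    linarith
  linarith

/-! #### half-integrality -/

lemma exists_halfint_le (G : SimpleGraph V) (c : V → ℝ) (hc : ∀ v, 0 ≤ c v)
    (x : V → ℝ) (hx : x ∈ lpPoly G) :
    ∃ x' ∈ lpPoly G, (∀ v, x' v = 0 ∨ x' v = 1/2 ∨ x' v = 1) ∧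
      ∑ v, c v * x' v ≤ ∑ v, c v * x v := by
  classical
  -- the set of coordinates not in {0, 1/2, 1}
  set bad : (V → ℝ) → Finset V :=
    fun z => univ.filter (fun v => ¬(z v = 0 ∨ z v = 1/2 ∨ z v = 1)) with hbaddef
  have main : ∀ n : ℕ, ∀ z : V → ℝ, z ∈ lpPoly G → (∀ v, z v ≤ 1) →
      (bad z).card ≤ n →
      ∃ x' ∈ lpPoly G, (∀ v, x' v = 0 ∨ x' v = 1/2 ∨ x' v = 1) ∧
        ∑ v, c v * x' v ≤ ∑ v, c v * z v := by
    intro n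
    induction n with
    | zero =>
      intro z hz hz1 hcard
      refine ⟨z, hz, ?_, le_refl _⟩
      intro v
      by_contra hvv
      have hvmem : v ∈ bad z := Finset.mem_filter.mpr ⟨Finset.mem_univ v, hvv⟩
      have : 0 < (bad z).card := Finset.card_pos.mpr ⟨v, hvmem⟩
      omega
    | succ n ih =>
      intro z hz hz1 hcard
      by_cases hbne : (bad z).Nonempty
      · -- perturbation step
        set B1 : Finset V := univ.filter (fun v => 1/2 < z v ∧ z v < 1) with hB1def
        set B2 : Finset V := univ.filter (fun v => 0 < z v ∧ z v < 1/2) with hB2def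
        have hB1 : ∀ v, v ∈ B1 ↔ (1/2 < z v ∧ z v < 1) := by intro v; simp [hB1def]
        have hB2 : ∀ v, v ∈ B2 ↔ (0 < z v ∧ z v < 1/2) := by intro v; simp [hB2def]
        have hgood : ∀ v, v ∉ B1 → v ∉ B2 → (z v = 0 ∨ z v = 1/2 ∨ z v = 1) := by
          intro v h1 h2
          rw [hB1, not_and_or, not_lt, not_lt] at h1
          rw [hB2, not_and_or, not_lt, not_lt] at h2
          have h0 := hz.1 v
          have hle := hz1 v
          rcases lt_trichotomy (z v) (1/2) with h | h | h
          · rcases h2 with h2 | h2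
            · exact Or.inl (le_antisymm h2 h0)
            · linarith
          · exact Or.inr (Or.inl h)
          · rcases h1 with h1 | h1
            · linarith
            · exact Or.inr (Or.inr (le_antisymm hle h1))
        have hbadBU : bad z ⊆ B1 ∪ B2 := by
          intro v hv
          simp only [hbaddef, Finset.mem_filter, Finset.mem_univ, true_and] at hv
          by_contra hB
          rw [Finset.mem_union] at hB
          push_neg at hB
          exact hv (hgood v hB.1 hB.2)
        have hBUbad : ∀ v, v ∈ B1 ∪ B2 → v ∈ bad z := by
          intro v hv
          simp only [hbaddef, Finset.mem_filter, Finset.mem_univ, true_and]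
          rw [Finset.mem_union] at hv
          rcases hv with h | h
          · rw [hB1] at h
            rintro (h' | h' | h') <;> rw [h'] at h <;> linarith [h.1, h.2]
          · rw [hB2] at h
            rintro (h' | h' | h') <;> rw [h'] at h <;> linarith [h.1, h.2]
        set E1 : Finset ℝ := B1.image (fun v => 1 - z v) ∪ B2.image (fun v => z v) with hE1def
        set E2 : Finset ℝ := B1.image (fun v => z v - 1/2) ∪ B2.image (fun v => 1/2 - z v)
          with hE2def
        have hne1 : E1.Nonempty := by
          obtain ⟨v, hv⟩ := hbne
          rcases Finset.mem_union.mp (hbadBU hv) with h | h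
          · exact ⟨_, Finset.mem_union_left _ (Finset.mem_image_of_mem _ h)⟩
          · exact ⟨_, Finset.mem_union_right _ (Finset.mem_image_of_mem _ h)⟩
        have hne2 : E2.Nonempty := by
          obtain ⟨v, hv⟩ := hbne
          rcases Finset.mem_union.mp (hbadBU hv) with h | h
          · exact ⟨_, Finset.mem_union_left _ (Finset.mem_image_of_mem _ h)⟩
          · exact ⟨_, Finset.mem_union_right _ (Finset.mem_image_of_mem _ h)⟩
        set e1 : ℝ := E1.min' hne1 with he1def
        set e2 : ℝ := E2.min' hne2 with he2def
        have he1pos : 0 < e1 := by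
          have hmem : e1 ∈ E1 := E1.min'_mem hne1
          rcases Finset.mem_union.mp hmem with h | h <;>
            obtain ⟨v, hv, heq⟩ := Finset.mem_image.mp h
          · rw [hB1] at hv; rw [← heq]; linarith [hv.2]
          · rw [hB2] at hv; rw [← heq]; linarith [hv.1]
        have he2pos : 0 < e2 := by
          have hmem : e2 ∈ E2 := E2.min'_mem hne2
          rcases Finset.mem_union.mp hmem with h | h <;>
            obtain ⟨v, hv, heq⟩ := Finset.mem_image.mp h
          · rw [hB1] at hv; rw [← heq]; linarith [hv.1]
          · rw [hB2] at hv; rw [← heq]; linarith [hv.2]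
        have hub1 : ∀ v ∈ B1, e1 ≤ 1 - z v ∧ e2 ≤ z v - 1/2 := by
          intro v hv
          constructor
          · exact Finset.min'_le _ _ (Finset.mem_union_left _ (Finset.mem_image_of_mem _ hv))
          · exact Finset.min'_le _ _ (Finset.mem_union_left _ (Finset.mem_image_of_mem _ hv))
        have hub2 : ∀ v ∈ B2, e1 ≤ z v ∧ e2 ≤ 1/2 - z v := by
          intro v hv
          constructor
          · exact Finset.min'_le _ _ (Finset.mem_union_right _ (Finset.mem_image_of_mem _ hv))
          · exact Finset.min'_le _ _ (Finset.mem_union_right _ (Finset.mem_image_of_mem _ hv))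
        have hdisj : ∀ v, v ∈ B1 → v ∉ B2 := by
          intro v h1 h2
          rw [hB1] at h1; rw [hB2] at h2
          linarith [h1.1, h2.2]
        set xp : V → ℝ := fun v => if v ∈ B1 then z v + e1 else if v ∈ B2 then z v - e1 else z v
          with hxpdef
        set xm : V → ℝ := fun v => if v ∈ B1 then z v - e2 else if v ∈ B2 then z v + e2 else z v
          with hxmdef
        -- feasibility of xp
        have hxpfeas : xp ∈ lpPoly G := by
          constructor
          · intro v
            rw [hxpdef]
            simp only
            split_ifs with h1 h2
            · linarith [hz.1 v]
            · linarith [(hub2 v h2).1]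
            · exact hz.1 v
          · intro a b hab
            have base := hz.2 hab
            rw [hxpdef]
            simp only
            split_ifs with ha1 hb1 hb2 ha2 hb1 hb2 hb1 hb2
            · linarith
            · linarith
            · linarith
            · -- a ∈ B2, b ∈ B1
              linarith
            · -- a ∈ B2, b ∈ B2 : impossible
              rw [hB2] at ha2 hb2
              linarith [ha2.2, hb2.2]
            · -- a ∈ B2, b good
              rcases hgood b hb1 hb2 with h | h | h
              · rw [hB2] at ha2; linarith [ha2.2]
              · rw [hB2] at ha2; linarith [ha2.2]
              · linarith [(hub2 a ha2).1]
            · linarith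
            · -- a good, b ∈ B2
              rcases hgood a ha1 ha2 with h | h | h
              · rw [hB2] at hb2; linarith [hb2.2]
              · rw [hB2] at hb2; linarith [hb2.2]
              · linarith [(hub2 b hb2).1]
            · exact base
        have hxple : ∀ v, xp v ≤ 1 := by
          intro v
          rw [hxpdef]
          simp only
          split_ifs with h1 h2
          · linarith [(hub1 v h1).1]
          · linarith [he1pos, hz1 v]
          · exact hz1 v
        -- feasibility of xm
        have hxmfeas : xm ∈ lpPoly G := by
          constructor
          · intro v
            rw [hxmdef]
            simp only
            split_ifs with h1 h2
            · linarith [(hub1 v h1).2]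
            · linarith [hz.1 v, he2pos]
            · exact hz.1 v
          · intro a b hab
            have base := hz.2 hab
            rw [hxmdef]
            simp only
            split_ifs with ha1 hb1 hb2 ha2 hb1 hb2 hb1 hb2
            · -- both B1
              linarith [(hub1 a ha1).2, (hub1 b hb1).2]
            · -- a B1, b B2
              linarith
            · -- a B1, b good
              rcases hgood b hb1 hb2 with h | h | h
              · rw [hB1] at ha1; linarith [ha1.2]
              · linarith [(hub1 a ha1).2]
              · linarith [(hub1 a ha1).2]
            · -- a B2, b B1
              linarith
            · -- a B2 b B2 impossible
              rw [hB2] at ha2 hb2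
              linarith [ha2.2, hb2.2]
            · -- a B2, b good
              rcases hgood b hb1 hb2 with h | h | h
              · rw [hB2] at ha2; linarith [ha2.2]
              · rw [hB2] at ha2; linarith [ha2.2]
              · linarith [he2pos]
            · -- a good, b B1
              rcases hgood a ha1 ha2 with h | h | h
              · rw [hB1] at hb1; linarith [hb1.2]
              · linarith [(hub1 b hb1).2]
              · linarith [(hub1 b hb1).2]
            · -- a good, b B2
              rcases hgood a ha1 ha2 with h | h | h
              · rw [hB2] at hb2; linarith [hb2.2]
              · rw [hB2] at hb2; linarith [hb2.2]
              · linarith [he2pos]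
            · exact base
        have hxmle : ∀ v, xm v ≤ 1 := by
          intro v
          rw [hxmdef]
          simp only
          split_ifs with h1 h2
          · linarith [hz1 v, he2pos]
          · linarith [(hub2 v h2).2]
          · exact hz1 v
        -- bad sets shrink strictly in both directions
        obtain ⟨v0, hv0B, hv0good⟩ :
            ∃ v0, v0 ∈ B1 ∪ B2 ∧ (xp v0 = 0 ∨ xp v0 = 1/2 ∨ xp v0 = 1) := by
          have hmem : e1 ∈ E1 := E1.min'_mem hne1
          rcases Finset.mem_union.mp hmem with h | h
          · obtain ⟨v, hv, heq⟩ := Finset.mem_image.mp h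
            refine ⟨v, Finset.mem_union_left _ hv, Or.inr (Or.inr ?_)⟩
            rw [hxpdef]; simp only; rw [if_pos hv]; linarith
          · obtain ⟨v, hv, heq⟩ := Finset.mem_image.mp h
            refine ⟨v, Finset.mem_union_right _ hv, Or.inl ?_⟩
            have hnb1 : v ∉ B1 := fun h1 => hdisj v h1 hv
            rw [hxpdef]; simp only; rw [if_neg hnb1, if_pos hv]; linarith
        obtain ⟨w0, hw0B, hw0good⟩ :
            ∃ w0, w0 ∈ B1 ∪ B2 ∧ (xm w0 = 0 ∨ xm w0 = 1/2 ∨ xm w0 = 1) := by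
          have hmem : e2 ∈ E2 := E2.min'_mem hne2
          rcases Finset.mem_union.mp hmem with h | h
          · obtain ⟨v, hv, heq⟩ := Finset.mem_image.mp h
            refine ⟨v, Finset.mem_union_left _ hv, Or.inr (Or.inl ?_)⟩
            rw [hxmdef]; simp only; rw [if_pos hv]; linarith
          · obtain ⟨v, hv, heq⟩ := Finset.mem_image.mp h
            refine ⟨v, Finset.mem_union_right _ hv, Or.inr (Or.inl ?_)⟩
            have hnb1 : v ∉ B1 := fun h1 => hdisj v h1 hv
            rw [hxmdef]; simp only; rw [if_neg hnb1, if_pos hv]; linarith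
        have hv0bad : v0 ∈ bad z := hBUbad v0 hv0B
        have hw0bad : w0 ∈ bad z := hBUbad w0 hw0B
        have hsubp : bad xp ⊆ (bad z).erase v0 := by
          intro u hu
          have hu' : ¬(xp u = 0 ∨ xp u = 1/2 ∨ xp u = 1) := (Finset.mem_filter.mp hu).2
          refine Finset.mem_erase.mpr ⟨?_, ?_⟩
          · rintro rfl; exact hu' hv0good
          · by_cases h1 : u ∈ B1
            · exact hBUbad u (Finset.mem_union_left _ h1)
            · by_cases h2 : u ∈ B2
              · exact hBUbad u (Finset.mem_union_right _ h2)
              · refine Finset.mem_filter.mpr ⟨Finset.mem_univ _, ?_⟩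
                have heqz : xp u = z u := by
                  rw [hxpdef]; simp only; rw [if_neg h1, if_neg h2]
                rw [← heqz]; exact hu'
        have hsubm : bad xm ⊆ (bad z).erase w0 := by
          intro u hu
          have hu' : ¬(xm u = 0 ∨ xm u = 1/2 ∨ xm u = 1) := (Finset.mem_filter.mp hu).2
          refine Finset.mem_erase.mpr ⟨?_, ?_⟩
          · rintro rfl; exact hu' hw0good
          · by_cases h1 : u ∈ B1
            · exact hBUbad u (Finset.mem_union_left _ h1)
            · by_cases h2 : u ∈ B2
              · exact hBUbad u (Finset.mem_union_right _ h2)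
              · refine Finset.mem_filter.mpr ⟨Finset.mem_univ _, ?_⟩
                have heqz : xm u = z u := by
                  rw [hxmdef]; simp only; rw [if_neg h1, if_neg h2]
                rw [← heqz]; exact hu'
        have hcardp : (bad xp).card ≤ n := by
          have := Finset.card_le_card hsubp
          rw [Finset.card_erase_of_mem hv0bad] at this
          omega
        have hcardm : (bad xm).card ≤ n := by
          have := Finset.card_le_card hsubm
          rw [Finset.card_erase_of_mem hw0bad] at this
          omega
        -- convex combination identity and choice of cheaper direction
        have hid : ∀ v, e2 * (c v * xp v) + e1 * (c v * xm v) = (e1 + e2) * (c v * z v) := by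
          intro v
          rw [hxpdef, hxmdef]; simp only
          split_ifs <;> ring
        have hsum : e2 * (∑ v, c v * xp v) + e1 * (∑ v, c v * xm v)
            = (e1 + e2) * (∑ v, c v * z v) := by
          rw [Finset.mul_sum, Finset.mul_sum, Finset.mul_sum, ← Finset.sum_add_distrib]
          exact Finset.sum_congr rfl fun v _ => hid v
        have hchoice : (∑ v, c v * xp v ≤ ∑ v, c v * z v) ∨
            (∑ v, c v * xm v ≤ ∑ v, c v * z v) := by
          by_contra hcon
          push_neg at hcon
          nlinarith [hcon.1, hcon.2, he1pos, he2pos]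
        rcases hchoice with hch | hch
        · obtain ⟨x', hf, hh, hcst⟩ := ih xp hxpfeas hxple hcardp
          exact ⟨x', hf, hh, hcst.trans hch⟩
        · obtain ⟨x', hf, hh, hcst⟩ := ih xm hxmfeas hxmle hcardm
          exact ⟨x', hf, hh, hcst.trans hch⟩
      · -- no bad coordinates
        refine ⟨z, hz, ?_, le_refl _⟩
        intro v
        by_contra hvv
        exact hbne ⟨v, Finset.mem_filter.mpr ⟨Finset.mem_univ v, hvv⟩⟩
  -- truncate x at 1, then apply main
  set x1 : V → ℝ := fun v => min (x v) 1 with hx1def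
  have hx1feas : x1 ∈ lpPoly G := by
    constructor
    · intro v
      exact le_min (hx.1 v) zero_le_one
    · intro a b hab
      have base := hx.2 hab
      rw [hx1def]
      simp only
      rcases le_total (x a) 1 with ha | ha <;> rcases le_total (x b) 1 with hb | hb
      · rw [min_eq_left ha, min_eq_left hb]; exact base
      · rw [min_eq_right hb]; have := le_min (hx.1 a) zero_le_one; linarith
      · rw [min_eq_right ha]; have := le_min (hx.1 b) zero_le_one; linarith
      · rw [min_eq_right ha]; have := le_min (hx.1 b) zero_le_one; linarith
  have hx1le : ∀ v, x1 v ≤ 1 := fun v => min_le_right _ _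
  obtain ⟨x', hfeas, hhalf, hcost⟩ := main (bad x1).card x1 hx1feas hx1le (le_refl _)
  refine ⟨x', hfeas, hhalf, ?_⟩
  refine hcost.trans (Finset.sum_le_sum ?_)
  intro v _
  exact mul_le_mul_of_nonneg_left (min_le_left _ _) (hc v)

lemma lpVal_attained (G : SimpleGraph V) (c : V → ℝ) (hc : ∀ v, 0 ≤ c v) :
    ∃ x ∈ lpPoly G, (∀ v, x v = 0 ∨ x v = 1/2 ∨ x v = 1) ∧
      ∑ v, c v * x v = lpVal G c := by
  classical
  set emb : (V → Fin 3) → (V → ℝ) := fun f v => ((f v : ℕ) : ℝ) / 2 with hembdef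
  have hhalf : ∀ f : V → Fin 3, ∀ v, emb f v = 0 ∨ emb f v = 1/2 ∨ emb f v = 1 := by
    intro f v
    rw [hembdef]; simp only
    have h3 := (f v).isLt
    interval_cases h : (f v : ℕ) <;> norm_num
  set H : Finset (V → Fin 3) := univ.filter (fun f => emb f ∈ lpPoly G) with hHdef
  have hHne : H.Nonempty := by
    refine ⟨fun _ => (2 : Fin 3), Finset.mem_filter.mpr ⟨Finset.mem_univ _, ?_, ?_⟩⟩
    · intro v; rw [hembdef]; norm_num
    · intro a b _; rw [hembdef]; norm_num
  obtain ⟨fh, hfhH, hmin⟩ := H.exists_min_image (fun f => ∑ v, c v * emb f v) hHne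
  have hfhfeas : emb fh ∈ lpPoly G := (Finset.mem_filter.mp hfhH).2
  refine ⟨emb fh, hfhfeas, hhalf fh, ?_⟩
  apply le_antisymm
  · -- emb fh cost is a lower bound of the LP value set
    refine le_csInf ⟨∑ v, c v * emb fh v, ⟨emb fh, hfhfeas, rfl⟩⟩ ?_
    rintro t ⟨x, hx, rfl⟩
    obtain ⟨x', hx'feas, hx'half, hx'cost⟩ := exists_halfint_le G c hc x hx
    set f' : V → Fin 3 := fun v => if x' v = 0 then 0 else if x' v = 1/2 then 1 else 2
      with hf'def
    have hembf' : emb f' = x' := by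
      funext v
      rw [hembdef, hf'def]; simp only
      rcases hx'half v with h | h | h
      · rw [h]; norm_num
      · rw [h]; norm_num
      · rw [h]; norm_num
    have hf'H : f' ∈ H := Finset.mem_filter.mpr ⟨Finset.mem_univ _, hembf' ▸ hx'feas⟩
    have := hmin f' hf'H
    rw [hembf'] at this
    exact this.trans hx'cost
  · exact lpVal_le G c hc _ hfhfeas

/-! #### upper bound -/

lemma ipVal_le_of_fc (G : SimpleGraph V) (hE : ∃ u v, G.Adj u v)
    (c : V → ℝ) (hc : ∀ v, 0 ≤ c v) {t : ℝ} (ht : t ∈ fcSet G) :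
    ipVal G c ≤ (2 - 2/t) * lpVal G c := by
  classical
  have ht2 : (2:ℝ) ≤ t := fcSet_ge_two G hE t ht
  have ht0 : (0:ℝ) < t := by linarith
  obtain ⟨xh, hxfeas, hxhalf, hxval⟩ := lpVal_attained G c hc
  obtain ⟨y, hy0, hysupp, hycov, hytot⟩ := ht
  set V1 : Finset V := univ.filter (fun v => xh v = 1) with hV1def
  set Vh : Finset V := univ.filter (fun v => xh v = 1/2) with hVhdef
  have hV1 : ∀ v, v ∈ V1 ↔ xh v = 1 := by intro v; simp [hV1def]
  have hVh : ∀ v, v ∈ Vh ↔ xh v = 1/2 := by intro v; simp [hVhdef]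
  set W : ℝ := ∑ v ∈ Vh, c v with hWdef
  have hW0 : 0 ≤ W := Finset.sum_nonneg fun v _ => hc v
  have hA0 : 0 ≤ ∑ v ∈ V1, c v := Finset.sum_nonneg fun v _ => hc v
  -- averaging over the fractional coloring
  have havg : W ≤ ∑ U : Finset V, y U * (∑ v ∈ Vh ∩ U, c v) := by
    have h1 : ∀ U : Finset V,
        y U * (∑ v ∈ Vh ∩ U, c v) = ∑ v ∈ Vh, (if v ∈ U then y U * c v else 0) := by
      intro U
      rw [Finset.mul_sum, ← Finset.filter_mem_eq_inter, Finset.sum_filter]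
    calc W = ∑ v ∈ Vh, c v := rfl
      _ ≤ ∑ v ∈ Vh, (∑ U : Finset V, if v ∈ U then y U else 0) * c v := by
          refine Finset.sum_le_sum ?_
          intro v _
          have := hycov v (Set.mem_univ v)
          nlinarith [hc v]
      _ = ∑ v ∈ Vh, ∑ U : Finset V, (if v ∈ U then y U * c v else 0) := by
          refine Finset.sum_congr rfl ?_
          intro v _
          rw [Finset.sum_mul]
          refine Finset.sum_congr rfl ?_
          intro U _
          split_ifs <;> simp
      _ = ∑ U : Finset V, ∑ v ∈ Vh, (if v ∈ U then y U * c v else 0) := Finset.sum_comm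
      _ = ∑ U : Finset V, y U * (∑ v ∈ Vh ∩ U, c v) := by
          exact Finset.sum_congr rfl fun U _ => (h1 U).symm
  have hexU : ∃ U : Finset V, y U ≠ 0 ∧ W / t ≤ ∑ v ∈ Vh ∩ U, c v := by
    by_contra hcon
    push_neg at hcon
    have hex0 : ∃ U0 : Finset V, y U0 ≠ 0 := by
      by_contra hall
      push_neg at hall
      obtain ⟨u, _, _⟩ := hE
      have h1 := hycov u (Set.mem_univ u)
      have : (∑ U : Finset V, if u ∈ U then y U else 0) = 0 :=
        Finset.sum_eq_zero fun U _ => by simp [hall U]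
      rw [this] at h1
      linarith
    obtain ⟨U0, hU0⟩ := hex0
    have hU0pos : 0 < y U0 := lt_of_le_of_ne (hy0 U0) (Ne.symm hU0)
    have hstrict : ∑ U : Finset V, y U * (∑ v ∈ Vh ∩ U, c v)
        < ∑ U : Finset V, y U * (W / t) := by
      refine Finset.sum_lt_sum ?_ ⟨U0, Finset.mem_univ U0, ?_⟩
      · intro U _
        by_cases hyU : y U = 0
        · simp [hyU]
        · exact mul_le_mul_of_nonneg_left (le_of_lt (hcon U hyU)) (hy0 U)
      · exact mul_lt_mul_of_pos_left (hcon U0 hU0) hU0pos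
    have heq : ∑ U : Finset V, y U * (W / t) = W := by
      rw [← Finset.sum_mul, ← hytot]
      field_simp
    linarith
  obtain ⟨U, hyU, hcU⟩ := hexU
  have hUindep : IsIndep G ↑U := (hysupp U hyU).1
  set S : Finset V := V1 ∪ (Vh \ U) with hSdef
  have hSvc : IsVC G ↑S := by
    intro a b hab
    have base := hxfeas.2 hab
    have hmemS : ∀ v, v ∈ V1 → v ∈ S := fun v hv =>
      Finset.mem_union_left _ hv
    have hmemS2 : ∀ v, v ∈ Vh → v ∉ U → v ∈ S := fun v hv hvU =>
      Finset.mem_union_right _ (Finset.mem_sdiff.mpr ⟨hv, hvU⟩)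
    rcases hxhalf a with ha | ha | ha
    · rcases hxhalf b with hb | hb | hb
      · rw [ha, hb] at base; norm_num at base
      · rw [ha, hb] at base; norm_num at base
      · exact Or.inr (Finset.mem_coe.mpr (hmemS b ((hV1 b).mpr hb)))
    · rcases hxhalf b with hb | hb | hb
      · rw [ha, hb] at base; norm_num at base
      · -- both one half
        have haVh : a ∈ Vh := (hVh a).mpr ha
        have hbVh : b ∈ Vh := (hVh b).mpr hb
        by_cases haU : a ∈ U
        · by_cases hbU : b ∈ U
          · exact absurd hab (hUindep (Finset.mem_coe.mpr haU) (Finset.mem_coe.mpr hbU))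
          · exact Or.inr (Finset.mem_coe.mpr (hmemS2 b hbVh hbU))
        · exact Or.inl (Finset.mem_coe.mpr (hmemS2 a haVh haU))
      · exact Or.inr (Finset.mem_coe.mpr (hmemS b ((hV1 b).mpr hb)))
    · exact Or.inl (Finset.mem_coe.mpr (hmemS a ((hV1 a).mpr ha)))
  have hdisjS : Disjoint V1 (Vh \ U) := by
    rw [Finset.disjoint_left]
    intro v hv1 hv2
    have h1 := (hV1 v).mp hv1
    have h2 := (hVh v).mp (Finset.mem_sdiff.mp hv2).1
    rw [h1] at h2
    norm_num at h2
  have hcostS : ∑ v ∈ S, c v = (∑ v ∈ V1, c v) + (W - ∑ v ∈ Vh ∩ U, c v) := by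
    rw [hSdef, Finset.sum_union hdisjS]
    congr 1
    have := Finset.sum_inter_add_sum_sdiff Vh U c
    linarith
  have hlp : lpVal G c = (∑ v ∈ V1, c v) + W / 2 := by
    rw [← hxval]
    have hpt : ∀ v, c v * xh v
        = (if v ∈ V1 then c v else 0) + (if v ∈ Vh then c v / 2 else 0) := by
      intro v
      rcases hxhalf v with h | h | h
      · have h1 : v ∉ V1 := by rw [hV1]; rw [h]; norm_num
        have h2 : v ∉ Vh := by rw [hVh]; rw [h]; norm_num
        rw [h, if_neg h1, if_neg h2]; ring
      · have h1 : v ∉ V1 := by rw [hV1]; rw [h]; norm_num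
        have h2 : v ∈ Vh := (hVh v).mpr h
        rw [h, if_neg h1, if_pos h2]; ring
      · have h1 : v ∈ V1 := (hV1 v).mpr h
        have h2 : v ∉ Vh := by rw [hVh]; rw [h]; norm_num
        rw [h, if_pos h1, if_neg h2]; ring
    rw [Finset.sum_congr rfl fun v _ => hpt v, Finset.sum_add_distrib]
    congr 1
    · rw [Finset.sum_ite_mem, Finset.univ_inter]
    · rw [Finset.sum_ite_mem, Finset.univ_inter, hWdef, Finset.sum_div]
  -- put it together
  have hip : ipVal G c ≤ (∑ v ∈ V1, c v) + (W - W / t) := by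
    have h1 := ipVal_le G c hc S hSvc
    rw [hcostS] at h1
    linarith
  rw [hlp]
  have h2t : 2 / t ≤ 1 := by
    rw [div_le_one ht0]; linarith
  have h3 : 2 / t * (∑ v ∈ V1, c v) ≤ ∑ v ∈ V1, c v := mul_le_of_le_one_left hA0 h2t
  have hWt : 2 / t * (W / 2) = W / t := by ring
  nlinarith [h3, hWt]

lemma gap_elem_le (G : SimpleGraph V) (hE : ∃ u v, G.Adj u v) :
    ∀ r ∈ gapSet G, r ≤ 2 - 2 / fracChrom G := by
  rintro r ⟨c, hc, hlp, rfl⟩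
  set ρ : ℝ := ipVal G c / lpVal G c with hρdef
  have hrle : ∀ t ∈ fcSet G, ρ ≤ 2 - 2/t := by
    intro t htf
    rw [hρdef, div_le_iff₀ hlp]
    exact ipVal_le_of_fc G hE c hc htf
  obtain ⟨t0, ht0⟩ := fcSet_nonempty G
  have ht02 : 2 ≤ t0 := fcSet_ge_two G hE t0 ht0
  have hr2 : ρ < 2 := by
    have h1 := hrle t0 ht0
    have h2 : (0:ℝ) < 2/t0 := by positivity
    linarith
  have hkey : 2 / (2 - ρ) ≤ fracChrom G := by
    rw [fracChrom_eq]
    refine le_csInf (fcSet_nonempty G) ?_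
    intro t htf
    have h1 := hrle t htf
    have ht2 : 2 ≤ t := fcSet_ge_two G hE t htf
    rw [div_le_iff₀ (by linarith : (0:ℝ) < 2 - ρ)]
    have h2 : 2 / t ≤ 2 - ρ := by linarith
    calc (2:ℝ) = t * (2/t) := by field_simp
      _ ≤ t * (2 - ρ) := mul_le_mul_of_nonneg_left h2 (by linarith)
  have hχ2 : 2 ≤ fracChrom G := fracChrom_ge_two G hE
  rw [div_le_iff₀ (by linarith : (0:ℝ) < 2 - ρ)] at hkey
  have h6 : 2 / fracChrom G ≤ 2 - ρ := by
    rw [div_le_iff₀ (by linarith : (0:ℝ) < fracChrom G)]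
    linarith
  linarith

lemma lpVal_one_pos (G : SimpleGraph V) (hE : ∃ u v, G.Adj u v) :
    0 < lpVal G (fun _ => 1) := by
  have h1 : (1:ℝ) ≤ lpVal G (fun _ => 1) := by
    refine le_csInf ⟨∑ v, (1:ℝ) * 1, ⟨fun _ => (1:ℝ), one_mem_lpPoly G, rfl⟩⟩ ?_
    rintro τ ⟨x, hx, rfl⟩
    obtain ⟨u, v, huv⟩ := hE
    have hne : u ≠ v := G.ne_of_adj huv
    have hsub : ({u, v} : Finset V) ⊆ univ := Finset.subset_univ _
    have h2 : ∑ w ∈ ({u, v} : Finset V), (1:ℝ) * x w ≤ ∑ w, (1:ℝ) * x w := by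
      refine Finset.sum_le_sum_of_subset_of_nonneg hsub ?_
      intro w _ _
      simpa using hx.1 w
    rw [Finset.sum_pair hne] at h2
    have := hx.2 huv
    simpa using le_trans (by simpa using this) h2
  linarith

lemma gapSet_nonempty (G : SimpleGraph V) (hE : ∃ u v, G.Adj u v) :
    (gapSet G).Nonempty :=
  ⟨_, fun _ => (1:ℝ), fun _ => zero_le_one, lpVal_one_pos G hE, rfl⟩

/-! #### LP duality for the fractional coloring LP -/

/-- Singleton sets are independent. -/
lemma singleton_indep (G : SimpleGraph V) (a : V) : IsIndep G ↑({a} : Finset V) := by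
  intro x hx y hy hadj
  simp only [Finset.coe_singleton, Set.mem_singleton_iff] at hx hy
  subst hx; subst hy; exact G.loopless.irrefl _ hadj

/-- Coverage of a vertex by the "all singletons with weight `M`" solution. -/
lemma cov_single (M : ℝ) (v : V) :
    (∑ U : Finset V, if v ∈ U then (if U.card = 1 then M else 0) else 0) = M := by
  have key : ∀ U : Finset V,
      (if v ∈ U then (if U.card = 1 then M else 0) else 0)
        = if U = {v} then M else 0 := by
    intro U
    by_cases h : U = {v}
    · subst h; simp
    · rcases Decidable.em (v ∈ U) with hv | hv
      · rcases Decidable.em (U.card = 1) with hc | hc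
        · obtain ⟨a, rfl⟩ := Finset.card_eq_one.mp hc
          simp only [Finset.mem_singleton] at hv
          exact absurd (by rw [hv]) h
        · simp [hv, hc, h]
      · simp [hv, h]
  rw [Finset.sum_congr rfl (fun U _ => key U), Finset.sum_ite_eq' univ ({v} : Finset V)]
  simp

/-- The feasible set of the "parametric" fractional covering LP with demand `u`. -/
def vSet (G : SimpleGraph V) (u : V → ℝ) : Set ℝ :=
  {t | ∃ y : Finset V → ℝ, (∀ U, 0 ≤ y U) ∧
    (∀ U, y U ≠ 0 → IsIndep G ↑U) ∧
    (∀ v, u v ≤ ∑ U : Finset V, if v ∈ U then y U else 0) ∧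
    t = ∑ U : Finset V, y U}

/-- Value function of the parametric LP. -/
noncomputable def vfun (G : SimpleGraph V) (u : V → ℝ) : ℝ := sInf (vSet G u)

lemma vSet_nonneg (G : SimpleGraph V) (u : V → ℝ) : ∀ t ∈ vSet G u, 0 ≤ t := by
  rintro t ⟨y, hy0, _, _, rfl⟩
  exact Finset.sum_nonneg fun U _ => hy0 U

lemma vSet_bddBelow (G : SimpleGraph V) (u : V → ℝ) : BddBelow (vSet G u) :=
  ⟨0, fun t ht => vSet_nonneg G u t ht⟩

lemma vSet_nonempty (G : SimpleGraph V) (u : V → ℝ) : (vSet G u).Nonempty := by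
  classical
  set M : ℝ := ∑ v, |u v| with hMdef
  have hM0 : 0 ≤ M := Finset.sum_nonneg fun v _ => abs_nonneg _
  have hMub : ∀ v, u v ≤ M := by
    intro v
    calc u v ≤ |u v| := le_abs_self _
      _ ≤ M := Finset.single_le_sum (fun w _ => abs_nonneg (u w)) (Finset.mem_univ v)
  refine ⟨∑ U : Finset V, (if U.card = 1 then M else 0),
    fun U => if U.card = 1 then M else 0, ?_, ?_, ?_, rfl⟩
  · intro U; dsimp only; split_ifs <;> simp [hM0]
  · intro U hU
    have hcard : U.card = 1 := by by_contra h; simp [h] at hU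
    obtain ⟨a, rfl⟩ := Finset.card_eq_one.mp hcard
    exact singleton_indep G a
  · intro v
    rw [cov_single M v]
    exact hMub v

lemma vfun_le (G : SimpleGraph V) {u : V → ℝ} {t : ℝ} (ht : t ∈ vSet G u) :
    vfun G u ≤ t :=
  csInf_le (vSet_bddBelow G u) ht

lemma le_vfun (G : SimpleGraph V) {u : V → ℝ} {b : ℝ} (hb : ∀ t ∈ vSet G u, b ≤ t) :
    b ≤ vfun G u :=
  le_csInf (vSet_nonempty G u) hb

lemma vfun_nonneg (G : SimpleGraph V) (u : V → ℝ) : 0 ≤ vfun G u :=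
  le_vfun G (vSet_nonneg G u)

lemma vfun_zero (G : SimpleGraph V) : vfun G (fun _ => 0) = 0 := by
  refine le_antisymm ?_ (vfun_nonneg G _)
  refine vfun_le G ?_
  exact ⟨fun _ => 0, fun U => le_refl 0, fun U hU => absurd rfl hU, by simp, by simp⟩

lemma vfun_mono (G : SimpleGraph V) {u u' : V → ℝ} (h : ∀ v, u v ≤ u' v) :
    vfun G u ≤ vfun G u' := by
  refine csInf_le_csInf (vSet_bddBelow G u) (vSet_nonempty G u') ?_
  rintro t ⟨y, hy0, hyi, hyc, rfl⟩
  exact ⟨y, hy0, hyi, fun v => (h v).trans (hyc v), rfl⟩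

lemma vfun_one (G : SimpleGraph V) : vfun G (fun _ => 1) = fracChrom G := by
  rw [fracChrom_eq]
  show sInf (vSet G (fun _ => 1)) = sInf (fcSet G)
  congr 1
  ext t
  constructor
  · rintro ⟨y, hy0, hyi, hyc, rfl⟩
    exact ⟨y, hy0, fun U hU => ⟨hyi U hU, by simp⟩, fun v _ => hyc v, rfl⟩
  · rintro ⟨y, hy0, hyi, hyc, rfl⟩
    exact ⟨y, hy0, fun U hU => (hyi U hU).1, fun v => hyc v (Set.mem_univ v), rfl⟩

lemma vfun_convexOn (G : SimpleGraph V) : ConvexOn ℝ Set.univ (vfun G) := by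
  refine ⟨convex_univ, ?_⟩
  intro u1 _ u2 _ p q hp hq hpq
  refine le_of_forall_pos_le_add ?_
  intro ε hε
  obtain ⟨t1, ht1mem, ht1⟩ := exists_lt_of_csInf_lt (vSet_nonempty G u1)
    (lt_add_of_pos_right (vfun G u1) (by linarith : (0:ℝ) < ε/2))
  obtain ⟨t2, ht2mem, ht2⟩ := exists_lt_of_csInf_lt (vSet_nonempty G u2)
    (lt_add_of_pos_right (vfun G u2) (by linarith : (0:ℝ) < ε/2))
  obtain ⟨y1, hy10, hy1i, hy1c, rfl⟩ := ht1mem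
  obtain ⟨y2, hy20, hy2i, hy2c, rfl⟩ := ht2mem
  have hmem : p * (∑ U : Finset V, y1 U) + q * (∑ U : Finset V, y2 U)
      ∈ vSet G (p • u1 + q • u2) := by
    refine ⟨fun U => p * y1 U + q * y2 U, ?_, ?_, ?_, ?_⟩
    · intro U
      dsimp only
      have ha := mul_nonneg hp (hy10 U)
      have hb := mul_nonneg hq (hy20 U)
      linarith
    · intro U hU
      dsimp only at hU
      by_cases h1 : y1 U = 0
      · by_cases h2 : y2 U = 0
        · exact absurd (by rw [h1, h2]; ring) hU
        · exact hy2i U h2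
      · exact hy1i U h1
    · intro v
      dsimp only
      have hlin : (∑ U : Finset V, if v ∈ U then p * y1 U + q * y2 U else 0)
          = p * (∑ U : Finset V, if v ∈ U then y1 U else 0)
            + q * (∑ U : Finset V, if v ∈ U then y2 U else 0) := by
        rw [Finset.mul_sum, Finset.mul_sum, ← Finset.sum_add_distrib]
        refine Finset.sum_congr rfl ?_
        intro U _
        split_ifs <;> simp
      rw [hlin]
      have h1 := mul_le_mul_of_nonneg_left (hy1c v) hp
      have h2 := mul_le_mul_of_nonneg_left (hy2c v) hq
      simp only [Pi.add_apply, Pi.smul_apply, smul_eq_mul]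
      linarith
    · dsimp only
      rw [Finset.mul_sum, Finset.mul_sum, ← Finset.sum_add_distrib]
  have hle := vfun_le G hmem
  have h1 : p * (∑ U : Finset V, y1 U) ≤ p * (vfun G u1 + ε/2) :=
    mul_le_mul_of_nonneg_left (le_of_lt ht1) hp
  have h2 : q * (∑ U : Finset V, y2 U) ≤ q * (vfun G u2 + ε/2) :=
    mul_le_mul_of_nonneg_left (le_of_lt ht2) hq
  have hexp1 : p * (vfun G u1 + ε/2) = p * vfun G u1 + p * (ε/2) := by ring
  have hexp2 : q * (vfun G u2 + ε/2) = q * vfun G u2 + q * (ε/2) := by ring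
  have hsum2 : p * (ε/2) + q * (ε/2) = ε/2 := by rw [← add_mul, hpq, one_mul]
  calc vfun G (p • u1 + q • u2) ≤ p * (∑ U : Finset V, y1 U) + q * (∑ U : Finset V, y2 U) := hle
    _ ≤ p * vfun G u1 + q * vfun G u2 + ε/2 := by linarith
    _ ≤ p * vfun G u1 + q * vfun G u2 + ε := by linarith


lemma exists_dual (G : SimpleGraph V) (hE : ∃ u v, G.Adj u v)
    {ε : ℝ} (hε : 0 < ε) :
    ∃ c : V → ℝ, (∀ v, 0 ≤ c v) ∧
      (∀ U : Finset V, IsIndep G ↑U → ∑ v ∈ U, c v ≤ 1) ∧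
      fracChrom G - ε < ∑ v, c v := by
  classical
  have hcont : Continuous (vfun G) := by
    have h := (vfun_convexOn G).continuousOn isOpen_univ
    rw [← continuousOn_univ]
    exact h
  set E : Set ((V → ℝ) × ℝ) := {p | vfun G p.1 ≤ p.2} with hEdef
  have hEconv : Convex ℝ E := by
    intro p hp q hq α β hα hβ hαβ
    have h1 : vfun G (α • p.1 + β • q.1) ≤ α * vfun G p.1 + β * vfun G q.1 :=
      (vfun_convexOn G).2 (Set.mem_univ p.1) (Set.mem_univ q.1) hα hβ hαβ
    have h2 : α * vfun G p.1 ≤ α * p.2 := mul_le_mul_of_nonneg_left hp hα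
    have h3 : β * vfun G q.1 ≤ β * q.2 := mul_le_mul_of_nonneg_left hq hβ
    show vfun G (α • p + β • q).1 ≤ (α • p + β • q).2
    simp only [Prod.fst_add, Prod.snd_add, Prod.smul_fst, Prod.smul_snd, smul_eq_mul]
    linarith
  have hEclosed : IsClosed E :=
    isClosed_le (hcont.comp continuous_fst) continuous_snd
  have hp0 : (((fun _ => (1:ℝ)) : V → ℝ), fracChrom G - ε) ∉ E := by
    show ¬ vfun G (fun _ => 1) ≤ fracChrom G - ε
    rw [vfun_one]
    linarith
  obtain ⟨f, u0, hfp0, hfE⟩ := geometric_hahn_banach_point_closed hEconv hEclosed hp0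
  set b : ℝ := f (0, 1) with hbdef
  set a : V → ℝ := fun v => f (Pi.single v 1, 0) with hadef
  set g : (V → ℝ) →ₗ[ℝ] ℝ := f.toLinearMap.comp (LinearMap.inl ℝ (V → ℝ) ℝ) with hgdef
  have hf_eq : ∀ (u : V → ℝ) (t : ℝ), f (u, t) = (∑ v, u v * a v) + t * b := by
    intro u t
    have hsplit : ((u, t) : (V → ℝ) × ℝ) = (u, 0) + t • (((0 : V → ℝ), (1:ℝ))) := by
      ext w
      · simp
      · simp
    rw [hsplit, map_add, map_smul, smul_eq_mul]
    have hg : f (u, 0) = g u := rfl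
    have hgu : g u = ∑ v, u v * a v := by
      rw [LinearMap.pi_apply_eq_sum_univ g u]
      refine Finset.sum_congr rfl ?_
      intro v _
      rw [smul_eq_mul]
      congr 1
      have hps : (fun j => if v = j then (1:ℝ) else 0) = Pi.single v 1 := by
        funext j
        rw [Pi.single_apply]
        simp [eq_comm]
      rw [hps]
      rfl
    rw [hg, hgu]
  have hstarE : ∀ (u : V → ℝ) (t : ℝ), vfun G u ≤ t →
      u0 < (∑ v, u v * a v) + t * b := by
    intro u t ht
    have hmem : ((u, t) : (V → ℝ) × ℝ) ∈ E := ht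
    have := hfE (u, t) hmem
    rwa [hf_eq] at this
  have hstar : ∀ u : V → ℝ, u0 < (∑ v, u v * a v) + vfun G u * b :=
    fun u => hstarE u (vfun G u) (le_refl _)
  have hu0neg : u0 < 0 := by
    have h4 := hstar (fun _ => 0)
    rw [vfun_zero] at h4
    simpa using h4
  have hb0 : 0 ≤ b := by
    by_contra hneg
    push_neg at hneg
    set M : ℝ := max 0 (u0 / b) with hMdef
    have h1 := hstarE (fun _ => 0) M (by rw [vfun_zero]; exact le_max_left _ _)
    have h2 : (∑ v, (0:ℝ) * a v) = 0 := by simp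
    rw [h2, zero_add] at h1
    have h3 : M * b ≤ (u0 / b) * b :=
      mul_le_mul_of_nonpos_right (le_max_right _ _) (le_of_lt hneg)
    rw [div_mul_cancel₀ u0 (ne_of_lt hneg)] at h3
    linarith
  have hbpos : 0 < b := by
    rcases eq_or_lt_of_le hb0 with heq | hlt
    · exfalso
      have hzero : ∀ u : V → ℝ, u0 < ∑ v, u v * a v := by
        intro u
        have h := hstar u
        rw [← heq, mul_zero, add_zero] at h
        exact h
      have hAsq : (0:ℝ) ≤ ∑ v, a v * a v :=
        Finset.sum_nonneg fun v _ => mul_self_nonneg _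
      rcases eq_or_lt_of_le hAsq with hsq0 | hsqpos
      · have hav : ∀ v, a v = 0 := by
          intro v
          have h := (Finset.sum_eq_zero_iff_of_nonneg
            (fun w (_ : w ∈ univ) => mul_self_nonneg (a w))).mp hsq0.symm
          exact mul_self_eq_zero.mp (h v (Finset.mem_univ v))
        have h2 := hf_eq (fun _ => 1) (fracChrom G - ε)
        have h3 : f (((fun _ => (1:ℝ)) : V → ℝ), fracChrom G - ε) = 0 := by
          rw [h2, ← heq]
          simp [hav]
        rw [h3] at hfp0
        linarith
      · set s : ℝ := (u0 - 1) / (∑ v, a v * a v) with hsdef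
        have h1 := hzero (fun v => s * a v)
        have h2 : ∑ v, (s * a v) * a v = s * ∑ v, a v * a v := by
          rw [Finset.mul_sum]
          exact Finset.sum_congr rfl fun v _ => by ring
        rw [h2, hsdef, div_mul_cancel₀ _ (ne_of_gt hsqpos)] at h1
        linarith
    · exact hlt
  set c : V → ℝ := fun v => -(a v) / b with hcdef
  have hsumc : ∀ S : Finset V, ∑ v ∈ S, c v = -(∑ v ∈ S, a v) / b := by
    intro S
    rw [hcdef]
    dsimp only
    rw [← Finset.sum_div, ← Finset.sum_neg_distrib]
  refine ⟨c, ?_, ?_, ?_⟩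
  · intro w
    by_contra hcw
    push_neg at hcw
    have haw : 0 < a w := by
      by_contra haw'
      push_neg at haw'
      have h1 : 0 ≤ -(a w) / b := div_nonneg (by linarith) hb0
      have h2 : c w = -(a w) / b := rfl
      rw [h2] at hcw
      linarith
    set M : ℝ := max 0 ((-u0) / a w) with hMdef
    set u : V → ℝ := fun v => if v = w then -M else 0 with hudef
    have hM0 : 0 ≤ M := le_max_left _ _
    have hu0' : ∀ v, u v ≤ (fun _ => (0:ℝ)) v := by
      intro v
      rw [hudef]
      dsimp only
      split_ifs
      · linarith
      · exact le_refl 0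
    have hvle : vfun G u ≤ 0 := by
      have := vfun_mono G hu0'
      rwa [vfun_zero] at this
    have h1 := hstarE u 0 hvle
    have h2 : ∑ v, u v * a v = -M * a w := by
      rw [hudef]
      dsimp only
      have key : ∀ v, (if v = w then -M else 0) * a v = if v = w then -M * a v else 0 := by
        intro v; split_ifs <;> simp
      rw [Finset.sum_congr rfl fun v _ => key v, Finset.sum_ite_eq' univ w]
      simp
    rw [h2, zero_mul, add_zero] at h1
    have h3 : -u0 ≤ M * a w := by
      have h4 : (-u0) / a w ≤ M := le_max_right _ _
      exact (div_le_iff₀ haw).mp h4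
    linarith
  · intro U hU
    by_contra hgt
    push_neg at hgt
    have hsum_a : ∑ v ∈ U, a v < -b := by
      have h := hsumc U
      rw [h] at hgt
      have h2 := (lt_div_iff₀ hbpos).mp hgt
      linarith
    set D : ℝ := (∑ v ∈ U, a v) + b with hDdef
    have hD : D < 0 := by rw [hDdef]; linarith
    set M : ℝ := max 1 (u0 / D) with hMdef
    have hMpos : (0:ℝ) < M := lt_of_lt_of_le one_pos (le_max_left _ _)
    set u : V → ℝ := fun v => if v ∈ U then M else 0 with hudef
    have hvle : vfun G u ≤ M := by
      refine vfun_le G ⟨fun W => if W = U then M else 0, ?_, ?_, ?_, ?_⟩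
      · intro W
        dsimp only
        split_ifs
        · exact hMpos.le
        · exact le_refl 0
      · intro W hW
        dsimp only at hW
        have hWU : W = U := by by_contra h; simp [h] at hW
        subst hWU
        exact hU
      · intro v
        have key : ∀ W : Finset V,
            (if v ∈ W then (if W = U then M else 0) else 0)
              = if W = U then (if v ∈ U then M else 0) else 0 := by
          intro W
          by_cases h2 : W = U
          · subst h2
            by_cases h1 : v ∈ W <;> simp [h1]
          · simp [h2]
        rw [Finset.sum_congr rfl fun W _ => key W, Finset.sum_ite_eq' univ U]
        simp [hudef]
      · rw [Finset.sum_ite_eq' univ U]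
        simp
    have h1 := hstarE u M hvle
    have h2 : ∑ v, u v * a v = M * ∑ v ∈ U, a v := by
      rw [hudef]
      dsimp only
      have key : ∀ v, (if v ∈ U then M else 0) * a v = if v ∈ U then M * a v else 0 := by
        intro v; split_ifs <;> simp
      rw [Finset.sum_congr rfl fun v _ => key v, Finset.sum_ite_mem, Finset.univ_inter,
        Finset.mul_sum]
    rw [h2] at h1
    have h3 : M * D ≤ u0 := (div_le_iff_of_neg hD).mp (le_max_right _ _)
    have h4 : M * D = M * (∑ v ∈ U, a v) + M * b := by rw [hDdef]; ring
    linarith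
  · have h2 := hf_eq (fun _ => 1) (fracChrom G - ε)
    rw [h2] at hfp0
    have h3 : ∑ v, (1:ℝ) * a v = ∑ v, a v := by simp
    rw [h3] at hfp0
    have h5 : ∑ v, c v = -(∑ v, a v) / b := hsumc univ
    rw [h5, lt_div_iff₀ hbpos]
    nlinarith

lemma half_mem_lpPoly (G : SimpleGraph V) : (fun _ => (1:ℝ)/2) ∈ lpPoly G :=
  ⟨fun _ => by norm_num, fun u v _ => by norm_num⟩

lemma gap_ge (G : SimpleGraph V) (hE : ∃ u v, G.Adj u v) :
    2 - 2 / fracChrom G ≤ gap G := by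
  classical
  have hχ2 : 2 ≤ fracChrom G := fracChrom_ge_two G hE
  refine le_of_forall_pos_le_add ?_
  intro δ hδ
  set ε : ℝ := min (1/2) δ with hεdef
  have hεpos : 0 < ε := lt_min (by norm_num) hδ
  have hεhalf : ε ≤ 1/2 := min_le_left _ _
  have hεδ : ε ≤ δ := min_le_right _ _
  obtain ⟨c, hc0, hfeas, hval⟩ := exists_dual G hE hεpos
  set C : ℝ := ∑ v, c v with hCdef
  have hC32 : 3/2 ≤ C := by
    have : fracChrom G - ε ≥ 2 - 1/2 := by linarith
    linarith
  have hCpos : 0 < C := by linarith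
  -- ipVal ≥ C - 1
  have hipge : C - 1 ≤ ipVal G c := by
    refine le_csInf ⟨∑ v ∈ (univ : Finset V), c v,
      univ, fun u v _ => Or.inl (Finset.mem_univ u), rfl⟩ ?_
    rintro τ ⟨S, hS, rfl⟩
    have hindep : IsIndep G ↑(univ \ S) := by
      intro x hx y hy hadj
      rw [Finset.coe_sdiff, Set.mem_diff] at hx hy
      rcases hS hadj with h | h
      · exact hx.2 h
      · exact hy.2 h
    have h1 : ∑ v ∈ univ \ S, c v ≤ 1 := hfeas _ hindep
    have h2 : ∑ v ∈ univ \ S, c v = C - ∑ v ∈ S, c v := by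
      rw [Finset.sum_sdiff_eq_sub (Finset.subset_univ S), hCdef]
    linarith
  -- lpVal ≤ C / 2
  have hlple : lpVal G c ≤ C / 2 := by
    have h1 := lpVal_le G c hc0 _ (half_mem_lpPoly G)
    have h2 : ∑ v, c v * (1/2 : ℝ) = C / 2 := by
      rw [hCdef, Finset.sum_div]
      exact Finset.sum_congr rfl fun v _ => by ring
    rwa [h2] at h1
  -- lpVal > 0
  have hippos : 0 < ipVal G c := by linarith
  have hlppos : 0 < lpVal G c := by
    have := ipVal_le_two_lp G c hc0
    linarith
  have hmem : ipVal G c / lpVal G c ∈ gapSet G := ⟨c, hc0, hlppos, rfl⟩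
  have hbdd : BddAbove (gapSet G) := ⟨2 - 2 / fracChrom G, fun r hr => gap_elem_le G hE r hr⟩
  have hgap : ipVal G c / lpVal G c ≤ gap G := le_csSup hbdd hmem
  -- ratio bound: 2 - 2/C ≤ ipVal/lpVal
  have hratio : 2 - 2 / C ≤ ipVal G c / lpVal G c := by
    have h1 : 2 - 2 / C = (C - 1) / (C / 2) := by
      field_simp
    rw [h1, div_le_div_iff₀ (by linarith) hlppos]
    have h2 : (C - 1) * lpVal G c ≤ (C - 1) * (C / 2) :=
      mul_le_mul_of_nonneg_left hlple (by linarith)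
    have h3 : (C - 1) * (C / 2) ≤ ipVal G c * (C / 2) :=
      mul_le_mul_of_nonneg_right hipge (by linarith)
    linarith
  -- 2 - 2/fracChrom ≤ 2 - 2/C + δ
  have hfinal : 2 / C - 2 / fracChrom G ≤ δ := by
    rcases le_total (fracChrom G) C with h | h
    · have h1 : 2 / C ≤ 2 / fracChrom G :=
        div_le_div_of_nonneg_left (by norm_num) (by linarith) h
      linarith
    · have hdiff : fracChrom G - C ≤ ε := by linarith
      have h1 : 2 / C - 2 / fracChrom G = 2 * (fracChrom G - C) / (C * fracChrom G) := by
        field_simp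
      have h2 : 2 * (fracChrom G - C) / (C * fracChrom G) ≤ 2 * ε / 3 := by
        apply div_le_div₀ (by positivity) (by linarith) (by norm_num)
        nlinarith
      linarith
  linarith

end Aux

/-- Main theorem: the integrality gap of the vertex cover LP relaxation equals
`2 - 2/χ^f(G)`. -/
theorem stmt7 {V : Type*} [Fintype V] [DecidableEq V] (G : SimpleGraph V)
    (hE : ∃ u v, G.Adj u v) :
    gap G = 2 - 2 / fracChrom G := by
  refine le_antisymm ?_ (gap_ge G hE)
  rw [gap_eq]
  exact csSup_le (gapSet_nonempty G hE) (gap_elem_le G hE)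
end

section
/- Let Q ⊆ P ⊆ ℝ^n_{≥0} be blocking-type polyhedra (upward closed: x ∈ P and y ≥ x implies y ∈ P, and similarly for Q). Then sup over nonnegative c of min{c^T x : x ∈ Q}/min{c^T x : x ∈ P} equals min{ρ ≥ 0 : ρ·x ∈ Q for all x ∈ P}. -/
open Finset

/-- A set of the form `{x | A x ≥ b}` for finitely many linear inequalities. -/
def IsPolyhedron {n : ℕ} (P : Set (Fin n → ℝ)) : Prop :=
  ∃ (m : ℕ) (A : Fin m → Fin n → ℝ) (b : Fin m → ℝ),
    P = {x | ∀ i, b i ≤ ∑ j, A i j * x j}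

lemma rows_nonneg {n m : ℕ} (A : Fin m → Fin n → ℝ) (b : Fin m → ℝ)
    (S : Set (Fin n → ℝ)) (hS : S = {x | ∀ i, b i ≤ ∑ j, A i j * x j})
    (hne : S.Nonempty)
    (hup : ∀ x ∈ S, ∀ y : Fin n → ℝ, (∀ j, x j ≤ y j) → y ∈ S)
    (i : Fin m) (j : Fin n) : 0 ≤ A i j := by
  by_contra h
  push_neg at h
  obtain ⟨y, hy⟩ := hne
  have hyi : b i ≤ ∑ k, A i k * y k := by
    rw [hS] at hy; exact hy i
  set t := (∑ k, A i k * y k - b i + 1) / (-A i j) with ht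
  have htpos : 0 < t := div_pos (by linarith) (by linarith)
  have hy' : (fun k => y k + if k = j then t else 0) ∈ S := by
    refine hup y hy _ (fun k => ?_)
    split <;> simp <;> linarith
  rw [hS] at hy'
  have h2 : b i ≤ ∑ k, A i k * (y k + if k = j then t else 0) := hy' i
  have h3 : ∑ k, A i k * (y k + if k = j then t else 0)
      = (∑ k, A i k * y k) + A i j * t := by
    simp only [mul_add, Finset.sum_add_distrib, mul_ite, mul_zero]
    rw [Finset.sum_ite_eq' Finset.univ j (fun k => A i k * t)]
    simp
  have h5 := div_mul_cancel₀ (∑ k, A i k * y k - b i + 1) (show (-A i j) ≠ 0 by linarith)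
  rw [← ht] at h5
  have h6 : A i j * t = -(t * (-A i j)) := by ring
  rw [h3] at h2
  linarith

/-- Goemans' strength-of-relaxation lemma for blocking-type polyhedra. -/
theorem stmt8 {n : ℕ} (P Q : Set (Fin n → ℝ))
    (hPpoly : IsPolyhedron P) (hQpoly : IsPolyhedron Q)
    (hQP : Q ⊆ P) (hQne : Q.Nonempty)
    (hPpos : ∀ x ∈ P, ∀ j, 0 ≤ x j)
    (hPup : ∀ x ∈ P, ∀ y : Fin n → ℝ, (∀ j, x j ≤ y j) → y ∈ P)
    (hQup : ∀ x ∈ Q, ∀ y : Fin n → ℝ, (∀ j, x j ≤ y j) → y ∈ Q) :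
    sSup {r | ∃ c : Fin n → ℝ, (∀ j, 0 ≤ c j) ∧
        0 < sInf {t | ∃ x ∈ P, t = ∑ j, c j * x j} ∧
        r = sInf {t | ∃ x ∈ Q, t = ∑ j, c j * x j} /
            sInf {t | ∃ x ∈ P, t = ∑ j, c j * x j}} =
      sInf {ρ : ℝ | 0 ≤ ρ ∧ ∀ x ∈ P, ρ • x ∈ Q} := by
  classical
  obtain ⟨q0, hq0⟩ := hQne
  have hPne : P.Nonempty := ⟨q0, hQP hq0⟩
  obtain ⟨mP, AP, bP, hPeq⟩ := hPpoly
  obtain ⟨mQ, AQ, bQ, hQeq⟩ := hQpoly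
  have hAQ : ∀ i j, 0 ≤ AQ i j := fun i j => rows_nonneg AQ bQ Q hQeq ⟨q0, hq0⟩ hQup i j
  have hAP : ∀ i j, 0 ≤ AP i j := fun i j => rows_nonneg AP bP P hPeq hPne hPup i j
  have hQpos : ∀ x ∈ Q, ∀ j, 0 ≤ x j := fun x hx => hPpos x (hQP hx)
  -- basics about the LP values
  have hbddP : ∀ c : Fin n → ℝ, (∀ j, 0 ≤ c j) →
      BddBelow {t | ∃ x ∈ P, t = ∑ j, c j * x j} := by
    intro c hc
    refine ⟨0, ?_⟩
    rintro t ⟨x, hx, rfl⟩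
    exact Finset.sum_nonneg fun j _ => mul_nonneg (hc j) (hPpos x hx j)
  have hbddQ : ∀ c : Fin n → ℝ, (∀ j, 0 ≤ c j) →
      BddBelow {t | ∃ x ∈ Q, t = ∑ j, c j * x j} := by
    intro c hc
    refine ⟨0, ?_⟩
    rintro t ⟨x, hx, rfl⟩
    exact Finset.sum_nonneg fun j _ => mul_nonneg (hc j) (hQpos x hx j)
  have hneP : ∀ c : Fin n → ℝ, ({t | ∃ x ∈ P, t = ∑ j, c j * x j}).Nonempty :=
    fun c => ⟨_, q0, hQP hq0, rfl⟩
  have hneQ : ∀ c : Fin n → ℝ, ({t | ∃ x ∈ Q, t = ∑ j, c j * x j}).Nonempty :=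
    fun c => ⟨_, q0, hq0, rfl⟩
  have hlpP_le : ∀ c : Fin n → ℝ, (∀ j, 0 ≤ c j) → ∀ x ∈ P,
      sInf {t | ∃ x ∈ P, t = ∑ j, c j * x j} ≤ ∑ j, c j * x j :=
    fun c hc x hx => csInf_le (hbddP c hc) ⟨x, hx, rfl⟩
  have hlpQ_le : ∀ c : Fin n → ℝ, (∀ j, 0 ≤ c j) → ∀ x ∈ Q,
      sInf {t | ∃ x ∈ Q, t = ∑ j, c j * x j} ≤ ∑ j, c j * x j :=
    fun c hc x hx => csInf_le (hbddQ c hc) ⟨x, hx, rfl⟩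
  have hlpQ_nonneg : ∀ c : Fin n → ℝ, (∀ j, 0 ≤ c j) →
      0 ≤ sInf {t | ∃ x ∈ Q, t = ∑ j, c j * x j} := by
    intro c hc
    refine le_csInf (hneQ c) ?_
    rintro t ⟨x, hx, rfl⟩
    exact Finset.sum_nonneg fun j _ => mul_nonneg (hc j) (hQpos x hx j)
  set L := {r | ∃ c : Fin n → ℝ, (∀ j, 0 ≤ c j) ∧
      0 < sInf {t | ∃ x ∈ P, t = ∑ j, c j * x j} ∧
      r = sInf {t | ∃ x ∈ Q, t = ∑ j, c j * x j} /
          sInf {t | ∃ x ∈ P, t = ∑ j, c j * x j}} with hLdef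
  set R := {ρ : ℝ | 0 ≤ ρ ∧ ∀ x ∈ P, ρ • x ∈ Q} with hRdef
  -- every element of L is a lower bound for R
  have hub : ∀ r ∈ L, ∀ ρ ∈ R, r ≤ ρ := by
    rintro r ⟨c, hc, hpos, rfl⟩ ρ ⟨hρ0, hρ⟩
    have hsmul : ∀ x ∈ P, ∑ j, c j * (ρ • x) j = ρ * ∑ j, c j * x j := by
      intro x hx
      rw [Finset.mul_sum]
      refine Finset.sum_congr rfl fun j _ => ?_
      simp [Pi.smul_apply, smul_eq_mul]; ring
    have key : sInf {t | ∃ x ∈ Q, t = ∑ j, c j * x j} ≤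
        ρ * sInf {t | ∃ x ∈ P, t = ∑ j, c j * x j} := by
      rcases eq_or_lt_of_le hρ0 with h0 | h0
      · obtain ⟨x, hx⟩ := hPne
        have h1 := hlpQ_le c hc _ (hρ x hx)
        rw [hsmul x hx, ← h0] at h1
        simpa [← h0] using h1
      · rw [← div_le_iff₀' h0]
        refine le_csInf (hneP c) ?_
        rintro t ⟨x, hx, rfl⟩
        rw [div_le_iff₀' h0]
        have h1 := hlpQ_le c hc _ (hρ x hx)
        rw [hsmul x hx] at h1
        exact h1
    exact (div_le_iff₀ hpos).mpr (by linarith)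
  -- δ : minimum coordinate sum over P
  have hδbdd : BddBelow {t | ∃ x ∈ P, t = ∑ j, x j} := by
    refine ⟨0, ?_⟩
    rintro t ⟨x, hx, rfl⟩
    exact Finset.sum_nonneg fun j _ => hPpos x hx j
  set δ := sInf {t | ∃ x ∈ P, t = ∑ j, x j} with hδdef
  have hδle : ∀ x ∈ P, δ ≤ ∑ j, x j := fun x hx => csInf_le hδbdd ⟨x, hx, rfl⟩
  -- separation
  have hsep : 0 < δ → ∀ ρ : ℝ, 0 ≤ ρ → ρ ∉ R → ∃ r ∈ L, ρ < r := by
    intro hδ ρ hρ0 hρR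
    have hx0 : ∃ x ∈ P, ρ • x ∉ Q := by
      by_contra hcon; push_neg at hcon; exact hρR ⟨hρ0, hcon⟩
    obtain ⟨x₀, hx₀P, hx₀Q⟩ := hx0
    rw [hQeq] at hx₀Q
    simp only [Set.mem_setOf_eq, not_forall, not_le] at hx₀Q
    obtain ⟨i, hi⟩ := hx₀Q
    set a := ∑ j, AQ i j * x₀ j with hadef
    set s := ∑ j, x₀ j with hsdef
    have ha0 : 0 ≤ a := Finset.sum_nonneg fun j _ => mul_nonneg (hAQ i j) (hPpos _ hx₀P j)
    have hs0 : 0 ≤ s := Finset.sum_nonneg fun j _ => hPpos _ hx₀P j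
    have hi' : ρ * a < bQ i := by
      have : ∑ j, AQ i j * (ρ • x₀) j = ρ * a := by
        rw [hadef, Finset.mul_sum]
        refine Finset.sum_congr rfl fun j _ => ?_
        simp [Pi.smul_apply, smul_eq_mul]; ring
      rw [this] at hi; exact hi
    set ε := (bQ i - ρ * a) / (ρ * s + 1) with hεdef
    have hε : 0 < ε := div_pos (by linarith) (by nlinarith)
    have hεval : ε * (ρ * s + 1) = bQ i - ρ * a := by
      rw [hεdef]; field_simp
    have hkey : ρ * a + ε * (ρ * s) < bQ i := by nlinarith
    set c' := fun j => AQ i j + ε with hc'def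
    have hc' : ∀ j, 0 ≤ c' j := fun j => by
      simp only [hc'def]; have := hAQ i j; linarith
    have hexpand : ∀ x : Fin n → ℝ,
        ∑ j, c' j * x j = (∑ j, AQ i j * x j) + ε * ∑ j, x j := by
      intro x
      simp only [hc'def, add_mul, Finset.sum_add_distrib, Finset.mul_sum]
    have hlpP' : ε * δ ≤ sInf {t | ∃ x ∈ P, t = ∑ j, c' j * x j} := by
      refine le_csInf (hneP c') ?_
      rintro t ⟨x, hx, rfl⟩
      rw [hexpand]
      have h1 : 0 ≤ ∑ j, AQ i j * x j :=
        Finset.sum_nonneg fun j _ => mul_nonneg (hAQ i j) (hPpos x hx j)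
      have h2 := hδle x hx
      nlinarith
    have hlpP'pos : 0 < sInf {t | ∃ x ∈ P, t = ∑ j, c' j * x j} :=
      lt_of_lt_of_le (by positivity) hlpP'
    have hlpQ' : bQ i ≤ sInf {t | ∃ x ∈ Q, t = ∑ j, c' j * x j} := by
      refine le_csInf (hneQ c') ?_
      rintro t ⟨y, hy, rfl⟩
      rw [hexpand]
      have h1 : bQ i ≤ ∑ j, AQ i j * y j := by
        rw [hQeq] at hy; exact hy i
      have h2 : 0 ≤ ∑ j, y j := Finset.sum_nonneg fun j _ => hQpos y hy j
      nlinarith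
    have hupper : sInf {t | ∃ x ∈ P, t = ∑ j, c' j * x j} ≤ a + ε * s := by
      have := hlpP_le c' hc' x₀ hx₀P
      rw [hexpand] at this
      exact this
    refine ⟨_, ⟨c', hc', hlpP'pos, rfl⟩, ?_⟩
    rw [lt_div_iff₀ hlpP'pos]
    calc ρ * sInf {t | ∃ x ∈ P, t = ∑ j, c' j * x j}
        ≤ ρ * (a + ε * s) := by nlinarith
      _ < bQ i := by nlinarith
      _ ≤ _ := hlpQ'
  -- case split on whether 0 ∈ P
  by_cases h0P : (0 : Fin n → ℝ) ∈ P
  · have hLempty : L = ∅ := by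
      refine Set.eq_empty_iff_forall_notMem.mpr ?_
      rintro r ⟨c, hc, hpos, _⟩
      have := hlpP_le c hc 0 h0P
      simp at this
      linarith
    rw [hLempty, Real.sSup_empty]
    by_cases h0Q : (0 : Fin n → ℝ) ∈ Q
    · have hR : R = Set.Ici (0 : ℝ) := by
        ext ρ
        constructor
        · rintro ⟨hρ0, _⟩; exact hρ0
        · intro hρ0
          refine ⟨hρ0, fun x hx => ?_⟩
          refine hQup 0 h0Q _ fun j => ?_
          simp [Pi.smul_apply, smul_eq_mul]
          exact mul_nonneg hρ0 (hPpos x hx j)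
      rw [hR, csInf_Ici]
    · have hR : R = ∅ := by
        refine Set.eq_empty_iff_forall_notMem.mpr ?_
        rintro ρ ⟨hρ0, hρ⟩
        have := hρ 0 h0P
        rw [smul_zero] at this
        exact h0Q this
      rw [hR, Real.sInf_empty]
  · -- 0 ∉ P, so δ > 0
    have hδpos : 0 < δ := by
      rw [hPeq] at h0P
      simp only [Set.mem_setOf_eq, not_forall, not_le] at h0P
      obtain ⟨i, hi⟩ := h0P
      have hbPi : 0 < bP i := by
        have : ∑ j, AP i j * (0 : Fin n → ℝ) j = 0 := by simp
        rw [this] at hi; exact hi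
      set M := ∑ j, AP i j with hMdef
      have hM0 : 0 ≤ M := Finset.sum_nonneg fun j _ => hAP i j
      have hMpos : 0 < M := by
        rcases eq_or_lt_of_le hM0 with hM | hM
        · exfalso
          have hzero : ∀ j ∈ Finset.univ, AP i j = 0 :=
            (Finset.sum_eq_zero_iff_of_nonneg fun j _ => hAP i j).mp hM.symm
          have hp : bP i ≤ ∑ j, AP i j * q0 j := by
            have := hQP hq0
            rw [hPeq] at this; exact this i
          have : ∑ j, AP i j * q0 j = 0 :=
            Finset.sum_eq_zero fun j hj => by rw [hzero j hj, zero_mul]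
          linarith
        · exact hM
      refine lt_of_lt_of_le (show (0:ℝ) < bP i / M from div_pos hbPi hMpos) ?_
      refine le_csInf ⟨_, q0, hQP hq0, rfl⟩ ?_
      rintro t ⟨x, hx, rfl⟩
      rw [div_le_iff₀ hMpos]
      have h1 : bP i ≤ ∑ j, AP i j * x j := by rw [hPeq] at hx; exact hx i
      have h2 : ∑ j, AP i j * x j ≤ ∑ j, AP i j * (∑ k, x k) := by
        refine Finset.sum_le_sum fun j _ => ?_
        refine mul_le_mul_of_nonneg_left ?_ (hAP i j)
        exact Finset.single_le_sum (fun k _ => hPpos x hx k) (Finset.mem_univ j)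
      have h3 : ∑ j, AP i j * (∑ k, x k) = (∑ k, x k) * M := by
        rw [← Finset.sum_mul, hMdef]
        exact mul_comm _ _
      linarith
    rcases Set.eq_empty_or_nonempty R with hRE | hRne
    · rw [hRE, Real.sInf_empty]
      have hnb : ¬ BddAbove L := by
        rintro ⟨ub, hub'⟩
        obtain ⟨r, hrL, hr⟩ := hsep hδpos (max ub 0 + 1) (by positivity)
          (by rw [hRE]; exact Set.notMem_empty _)
        have h1 : r ≤ ub := hub' hrL
        have h2 := le_max_left ub 0
        linarith
      rw [Real.sSup_of_not_bddAbove hnb]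
    · have hR0 : ∀ ρ ∈ R, (0:ℝ) ≤ ρ := fun ρ h => h.1
      have hρs0 : 0 ≤ sInf R := le_csInf hRne hR0
      have hRbdd : BddBelow R := ⟨0, hR0⟩
      have hρsR : sInf R ∈ R := by
        refine ⟨hρs0, fun x hx => ?_⟩
        rw [hQeq]
        intro i
        set a := ∑ j, AQ i j * x j with hadef
        have ha0 : 0 ≤ a := Finset.sum_nonneg fun j _ => mul_nonneg (hAQ i j) (hPpos x hx j)
        have hρa : ∀ ρ ∈ R, bQ i ≤ ρ * a := by
          intro ρ hρ
          have := hρ.2 x hx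
          rw [hQeq] at this
          have h1 := this i
          have h2 : ∑ j, AQ i j * (ρ • x) j = ρ * a := by
            rw [hadef, Finset.mul_sum]
            refine Finset.sum_congr rfl fun j _ => ?_
            simp [Pi.smul_apply, smul_eq_mul]; ring
          rw [h2] at h1; exact h1
        have hgoal : bQ i ≤ sInf R * a := by
          rcases eq_or_lt_of_le ha0 with ha | ha
          · obtain ⟨ρ₁, hρ₁⟩ := hRne
            have := hρa ρ₁ hρ₁
            rw [← ha] at this ⊢
            simpa using this
          · have h1 : ∀ ρ ∈ R, bQ i / a ≤ ρ := fun ρ hρ =>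
              (div_le_iff₀ ha).mpr (hρa ρ hρ)
            have h2 : bQ i / a ≤ sInf R := le_csInf hRne h1
            calc bQ i = bQ i / a * a := by field_simp
              _ ≤ sInf R * a := mul_le_mul_of_nonneg_right h2 (le_of_lt ha)
        have h3 : ∑ j, AQ i j * (sInf R • x) j = sInf R * a := by
          rw [hadef, Finset.mul_sum]
          refine Finset.sum_congr rfl fun j _ => ?_
          simp [Pi.smul_apply, smul_eq_mul]; ring
        rw [h3]; exact hgoal
      have hones : {t | ∃ x ∈ P, t = ∑ j, (fun _ : Fin n => (1:ℝ)) j * x j}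
          = {t | ∃ x ∈ P, t = ∑ j, x j} := by simp
      have hLne : L.Nonempty := by
        refine ⟨_, ⟨fun _ => (1:ℝ), fun j => zero_le_one, ?_, rfl⟩⟩
        rw [hones]
        exact hδpos
      have hbddL : BddAbove L := ⟨sInf R, fun r hr => hub r hr (sInf R) hρsR⟩
      apply le_antisymm
      · exact csSup_le hLne fun r hr => hub r hr (sInf R) hρsR
      · by_contra hlt
        push_neg at hlt
        have hσ0 : 0 ≤ sSup L := by
          obtain ⟨r, hrL⟩ := hLne
          obtain ⟨c, hc, hpos, hreq⟩ := id hrL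
          have hr0 : 0 ≤ r := hreq ▸ div_nonneg (hlpQ_nonneg c hc) (le_of_lt hpos)
          exact le_trans hr0 (le_csSup hbddL hrL)
        have hσR : sSup L ∉ R := fun h => absurd (csInf_le hRbdd h) (not_le.mpr hlt)
        obtain ⟨r, hrL, hr⟩ := hsep hδpos (sSup L) hσ0 hσR
        exact absurd (le_csSup hbddL hrL) (not_le.mpr hr)
end

section
/- If G is a finite graph with chromatic number χ(G) ≤ k, then the vertex cover LP integrality gap satisfies ρ(G) ≤ 2 − 2/k. In particular, for planar graphs ρ(G) ≤ 3/2. -/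
open Finset

noncomputable def mx (s : Finset ℝ) : ℝ := WithBot.unbotD 0 s.max

lemma le_mx {s : Finset ℝ} {x : ℝ} (hx : x ∈ s) : x ≤ mx s := by
  have h := Finset.le_max hx
  unfold mx
  rcases hmax : s.max with _ | m
  · have : s = ∅ := Finset.max_eq_bot.mp hmax
    subst this; simp at hx
  · rw [hmax] at h
    exact WithBot.coe_le_coe.mp h

lemma mx_le {s : Finset ℝ} {c : ℝ} (h0 : 0 ≤ c) (h : ∀ x ∈ s, x ≤ c) : mx s ≤ c := by
  unfold mx
  rcases hmax : s.max with _ | m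
  · exact h0
  · exact h m (Finset.mem_of_max hmax)

lemma mx_zero_or_mem (s : Finset ℝ) : mx s = 0 ∨ mx s ∈ s := by
  unfold mx
  rcases hmax : s.max with _ | m
  · exact Or.inl rfl
  · exact Or.inr (Finset.mem_of_max hmax)

lemma mx_nonneg {s : Finset ℝ} (h : ∀ x ∈ s, 0 ≤ x) : 0 ≤ mx s := by
  rcases mx_zero_or_mem s with h1 | h1
  · simp [h1]
  · exact h _ h1

lemma tele (B : Finset ℝ) :
    ∀ a : ℝ, ∑ b ∈ B.filter (· ≤ a), (b - mx (B.filter (· < b))) = mx (B.filter (· ≤ a)) := by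
  classical
  induction B using Finset.induction_on_max with
  | empty => intro a; simp [mx]
  | insert M s hM ih =>
    intro a
    have hMs : M ∉ s := fun h => lt_irrefl M (hM M h)
    have hfilt_lt : ∀ b ∈ s, (insert M s).filter (· < b) = s.filter (· < b) := by
      intro b hb
      ext y; simp only [Finset.mem_filter, Finset.mem_insert]
      constructor
      · rintro ⟨(rfl | hy), hlt⟩
        · exact absurd hlt (not_lt.2 (hM b hb).le)
        · exact ⟨hy, hlt⟩
      · rintro ⟨hy, hlt⟩; exact ⟨Or.inr hy, hlt⟩
    have hsum : ∀ t : Finset ℝ, t ⊆ s → ∑ b ∈ t, (b - mx ((insert M s).filter (· < b))) =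
        ∑ b ∈ t, (b - mx (s.filter (· < b))) := by
      intro t ht
      exact Finset.sum_congr rfl fun b hb => by rw [hfilt_lt b (ht hb)]
    have hsfM : s.filter (· ≤ M) = s :=
      Finset.filter_true_of_mem fun b hb => (hM b hb).le
    have h4 : ∑ b ∈ s, (b - mx (s.filter (· < b))) = mx s := by
      have h3 := ih M
      rw [hsfM] at h3
      exact h3
    by_cases hMa : M ≤ a
    · have h1 : (insert M s).filter (· ≤ a) = insert M s := by
        apply Finset.filter_true_of_mem
        intro b hb
        rcases Finset.mem_insert.1 hb with rfl | hb
        · exact hMa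
        · exact (hM b hb).le.trans hMa
      have hMfilt : (insert M s).filter (· < M) = s := by
        ext y; simp only [Finset.mem_filter, Finset.mem_insert]
        constructor
        · rintro ⟨(rfl | hy), hlt⟩
          · exact absurd hlt (lt_irrefl _)
          · exact hy
        · intro hy; exact ⟨Or.inr hy, hM y hy⟩
      have hmaxins : mx (insert M s) = M := by
        unfold mx
        rw [Finset.max_insert]
        have hsm : s.max ≤ (M : WithBot ℝ) := by
          apply Finset.max_le
          intro y hy
          exact_mod_cast (hM y hy).le
        rw [max_eq_left hsm]
        rfl
      rw [h1, Finset.sum_insert hMs, hMfilt, hmaxins,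
        hsum s (Finset.Subset.refl s), h4]
      ring
    · have h1 : (insert M s).filter (· ≤ a) = s.filter (· ≤ a) := by
        ext y; simp only [Finset.mem_filter, Finset.mem_insert]
        constructor
        · rintro ⟨(rfl | hy), hle⟩
          · exact absurd hle hMa
          · exact ⟨hy, hle⟩
        · rintro ⟨hy, hle⟩; exact ⟨Or.inr hy, hle⟩
      rw [h1, hsum _ (Finset.filter_subset _ _), ih a]


lemma core_s13 {V : Type*} [Fintype V] [DecidableEq V] (G : SimpleGraph V)
    (k : ℕ) (hk2 : 2 ≤ k) (col : G.Coloring (Fin k)) (c : V → ℝ) (hc : ∀ v, 0 ≤ c v)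
    (x : V → ℝ) (hx : x ∈ lpPoly G) :
    ipVal G c ≤ (2 - 2 / (k : ℝ)) * ∑ v, c v * x v := by
  classical
  obtain ⟨hx0, hxe⟩ := hx
  have hkR : (2:ℝ) ≤ (k:ℝ) := by exact_mod_cast hk2
  have hk0 : (0:ℝ) < (k:ℝ) := by linarith
  set x' : V → ℝ := fun v => min (x v) 1 with hx'def
  have hx'0 : ∀ v, 0 ≤ x' v := fun v => le_min (hx0 v) zero_le_one
  have hx'1 : ∀ v, x' v ≤ 1 := fun v => min_le_right _ _
  have hx'le : ∀ v, x' v ≤ x v := fun v => min_le_left _ _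
  have hx'e : ∀ ⦃u v⦄, G.Adj u v → 1 ≤ x' u + x' v := by
    intro u v h
    rcases le_or_gt 1 (x u) with h1 | h1
    · have hu : x' u = 1 := min_eq_right h1
      have := hx'0 v; linarith
    rcases le_or_gt 1 (x v) with h2 | h2
    · have hv : x' v = 1 := min_eq_right h2
      have := hx'0 u; linarith
    have h3 := hxe h
    have hu : x' u = x u := min_eq_left h1.le
    have hv : x' v = x v := min_eq_left h2.le
    linarith
  -- the breakpoint set
  set B : Finset ℝ := insert (1/2)
    (((Finset.univ.image x') ∪ (Finset.univ.image (fun v => 1 - x' v))).filter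
      (fun b => 0 < b ∧ b < 1/2)) with hBdef
  have hBhalf : (1/2 : ℝ) ∈ B := Finset.mem_insert_self _ _
  have hBpos : ∀ b ∈ B, 0 < b := by
    intro b hb
    rcases Finset.mem_insert.1 hb with rfl | hb
    · norm_num
    · exact (Finset.mem_filter.1 hb).2.1
  have hBle : ∀ b ∈ B, b ≤ 1/2 := by
    intro b hb
    rcases Finset.mem_insert.1 hb with rfl | hb
    · exact le_refl _
    · exact (Finset.mem_filter.1 hb).2.2.le
  have hBx : ∀ v, 0 < x' v → x' v < 1/2 → x' v ∈ B := by
    intro v h1 h2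
    refine Finset.mem_insert_of_mem (Finset.mem_filter.2 ⟨?_, h1, h2⟩)
    exact Finset.mem_union_left _ (Finset.mem_image_of_mem _ (Finset.mem_univ v))
  have hB1x : ∀ v, 0 < 1 - x' v → 1 - x' v < 1/2 → 1 - x' v ∈ B := by
    intro v h1 h2
    refine Finset.mem_insert_of_mem (Finset.mem_filter.2 ⟨?_, h1, h2⟩)
    exact Finset.mem_union_right _ (Finset.mem_image_of_mem _ (Finset.mem_univ v))
  have hw0 : ∀ b ∈ B, 0 ≤ b - mx (B.filter (· < b)) := by
    intro b hb
    rcases mx_zero_or_mem (B.filter (· < b)) with h | h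
    · rw [h]; linarith [hBpos b hb]
    · have := (Finset.mem_filter.1 h).2
      linarith
  have hmxB : mx B = 1/2 := le_antisymm (mx_le (by norm_num) hBle) (le_mx hBhalf)
  have hsum_w : ∑ b ∈ B, (b - mx (B.filter (· < b))) = 1/2 := by
    have h1 := tele B (1/2)
    rw [Finset.filter_true_of_mem hBle] at h1
    rw [h1, hmxB]
  -- abbreviations
  set A : V → ℝ := fun v => mx (B.filter (· ≤ x' v)) with hAdef
  set m2 : V → ℝ := fun v => mx (B.filter (· ≤ 1 - x' v)) with hm2def
  have hA_le : ∀ v, A v ≤ x' v := fun v =>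
    mx_le (hx'0 v) (fun y hy => (Finset.mem_filter.1 hy).2)
  have hA0 : ∀ v, 0 ≤ A v := fun v =>
    mx_nonneg (fun y hy => (hBpos y (Finset.mem_filter.1 hy).1).le)
  have hcomb : ∀ v, A v + 1/2 ≤ x' v + m2 v := by
    intro v
    rcases le_or_gt (1/2) (x' v) with h | h
    · have hA12 : A v ≤ 1/2 :=
        mx_le (by norm_num) (fun y hy => hBle y (Finset.mem_filter.1 hy).1)
      rcases le_or_gt (1 - x' v) 0 with h2 | h2
      · have hm0 : 0 ≤ m2 v :=
          mx_nonneg (fun y hy => (hBpos y (Finset.mem_filter.1 hy).1).le)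
        linarith
      · have hmem : (1 - x' v) ∈ B := by
          rcases lt_or_eq_of_le (show 1 - x' v ≤ 1/2 by linarith) with hlt | heq
          · exact hB1x v h2 hlt
          · rw [heq]; exact hBhalf
        have hle2 : 1 - x' v ≤ m2 v := le_mx (Finset.mem_filter.2 ⟨hmem, le_refl _⟩)
        linarith
    · have hm12 : (1/2:ℝ) ≤ m2 v := le_mx (Finset.mem_filter.2 ⟨hBhalf, by linarith⟩)
      have := hA_le v
      linarith
  -- the covers
  have hcover : ∀ b ∈ B, ∀ j : Fin k,
      IsVC G ↑(Finset.univ.filter (fun v => if col v = j then 1 - x' v < b else b ≤ x' v)) := by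
    intro b hb j u v huv
    have hbpos := hBpos b hb
    have hble := hBle b hb
    have hne : col u ≠ col v := col.valid huv
    have hsum := hx'e huv
    simp only [Finset.coe_filter, Set.mem_setOf_eq, Finset.mem_univ, true_and]
    by_cases hu : col u = j
    · have hv : ¬ col v = j := fun hh => hne (hu.trans hh.symm)
      rw [if_pos hu, if_neg hv]
      rcases lt_or_ge (1 - x' u) b with hcase | hcase
      · exact Or.inl hcase
      · right; linarith
    · rw [if_neg hu]
      by_cases hv : col v = j
      · rw [if_pos hv]
        rcases lt_or_ge (1 - x' v) b with hcase | hcase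
        · exact Or.inr hcase
        · left; linarith
      · rw [if_neg hv]
        rcases le_total (x' u) (x' v) with hcase | hcase
        · right; linarith
        · left; linarith
  have hipS : ∀ b ∈ B, ∀ j : Fin k,
      ipVal G c ≤ ∑ v ∈ Finset.univ.filter
        (fun v => if col v = j then 1 - x' v < b else b ≤ x' v), c v := by
    intro b hb j
    apply csInf_le
    · refine ⟨0, ?_⟩
      rintro t ⟨S, hS, rfl⟩
      exact Finset.sum_nonneg fun v _ => hc v
    · exact ⟨_, hcover b hb j, rfl⟩
  -- per-vertex j-sums
  have hjsum : ∀ (v : V) (a q : ℝ),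
      ∑ j : Fin k, (if col v = j then a else q) = a + ((k:ℝ)-1) * q := by
    intro v a q
    rw [← Finset.add_sum_erase Finset.univ _ (Finset.mem_univ (col v)), if_pos rfl]
    have h1 : ∀ j ∈ Finset.univ.erase (col v), (if col v = j then a else q) = q := by
      intro j hj
      exact if_neg (fun hh => (Finset.mem_erase.1 hj).1 hh.symm)
    rw [Finset.sum_congr rfl h1, Finset.sum_const, Finset.card_erase_of_mem (Finset.mem_univ _),
      Finset.card_univ, Fintype.card_fin, nsmul_eq_mul, Nat.cast_sub (by omega : 1 ≤ k),
      Nat.cast_one]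
  have hcost : ∀ b ∈ B, ∑ j : Fin k, (∑ v ∈ Finset.univ.filter
        (fun v => if col v = j then 1 - x' v < b else b ≤ x' v), c v)
      = ∑ v : V, ((if 1 - x' v < b then c v else 0)
          + ((k:ℝ)-1) * (if b ≤ x' v then c v else 0)) := by
    intro b hb
    calc ∑ j : Fin k, ∑ v ∈ Finset.univ.filter
          (fun v => if col v = j then 1 - x' v < b else b ≤ x' v), c v
        = ∑ j : Fin k, ∑ v : V,
            (if (if col v = j then 1 - x' v < b else b ≤ x' v) then c v else 0) := by
          exact Finset.sum_congr rfl fun j _ => Finset.sum_filter _ _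
      _ = ∑ v : V, ∑ j : Fin k,
            (if (if col v = j then 1 - x' v < b else b ≤ x' v) then c v else 0) :=
          Finset.sum_comm
      _ = ∑ v : V, ∑ j : Fin k, (if col v = j then (if 1 - x' v < b then c v else 0)
            else (if b ≤ x' v then c v else 0)) := by
          refine Finset.sum_congr rfl fun v _ => Finset.sum_congr rfl fun j _ => ?_
          by_cases hh : col v = j <;> simp [hh]
      _ = ∑ v : V, ((if 1 - x' v < b then c v else 0)
            + ((k:ℝ)-1) * (if b ≤ x' v then c v else 0)) :=
          Finset.sum_congr rfl fun v _ => hjsum v _ _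
  -- generic weighted-threshold sums
  have hgen1 : ∀ a r : ℝ, ∑ b ∈ B, ((b - mx (B.filter (· < b))) * if b ≤ a then r else 0)
      = mx (B.filter (· ≤ a)) * r := by
    intro a r
    calc ∑ b ∈ B, ((b - mx (B.filter (· < b))) * if b ≤ a then r else 0)
        = ∑ b ∈ B, (if b ≤ a then (b - mx (B.filter (· < b))) * r else 0) := by
          refine Finset.sum_congr rfl fun b _ => ?_
          by_cases hh : b ≤ a <;> simp [hh]
      _ = ∑ b ∈ B.filter (· ≤ a), (b - mx (B.filter (· < b))) * r :=
          (Finset.sum_filter _ _).symm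
      _ = (∑ b ∈ B.filter (· ≤ a), (b - mx (B.filter (· < b)))) * r := by
          rw [Finset.sum_mul]
      _ = mx (B.filter (· ≤ a)) * r := by rw [tele B a]
  have hgen2 : ∀ a r : ℝ, ∑ b ∈ B, ((b - mx (B.filter (· < b))) * if a < b then r else 0)
      = (1/2 - mx (B.filter (· ≤ a))) * r := by
    intro a r
    have hsplit := Finset.sum_filter_add_sum_filter_not B (fun b => b ≤ a)
      (fun b => b - mx (B.filter (· < b)))
    calc ∑ b ∈ B, ((b - mx (B.filter (· < b))) * if a < b then r else 0)
        = ∑ b ∈ B, (if ¬ b ≤ a then (b - mx (B.filter (· < b))) * r else 0) := by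
          refine Finset.sum_congr rfl fun b _ => ?_
          rcases le_or_gt b a with hh | hh
          · simp [hh, not_lt.2 hh]
          · simp [hh, not_le.2 hh]
      _ = ∑ b ∈ B.filter (fun b => ¬ b ≤ a), (b - mx (B.filter (· < b))) * r :=
          (Finset.sum_filter _ _).symm
      _ = (∑ b ∈ B.filter (fun b => ¬ b ≤ a), (b - mx (B.filter (· < b)))) * r := by
          rw [Finset.sum_mul]
      _ = (1/2 - mx (B.filter (· ≤ a))) * r := by
          have h5 : ∑ b ∈ B.filter (fun b => ¬ b ≤ a), (b - mx (B.filter (· < b)))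
              = 1/2 - mx (B.filter (· ≤ a)) := by
            have h6 := tele B a
            have h7 : B.filter (· ≤ a) = B.filter (fun b => b ≤ a) := rfl
            rw [h7] at h6
            linarith [hsplit, hsum_w, h6]
          rw [h5]
  -- total
  have key1 : (k:ℝ) * (1/2) * ipVal G c ≤
      ∑ b ∈ B, ((b - mx (B.filter (· < b))) * ∑ j : Fin k, (∑ v ∈ Finset.univ.filter
        (fun v => if col v = j then 1 - x' v < b else b ≤ x' v), c v)) := by
    have h1 : ∑ b ∈ B, ((b - mx (B.filter (· < b))) * ((k:ℝ) * ipVal G c))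
        = (k:ℝ) * (1/2) * ipVal G c := by
      rw [← Finset.sum_mul, hsum_w]; ring
    rw [← h1]
    apply Finset.sum_le_sum
    intro b hb
    apply mul_le_mul_of_nonneg_left _ (hw0 b hb)
    calc (k:ℝ) * ipVal G c = ∑ _j : Fin k, ipVal G c := by
          rw [Finset.sum_const, Finset.card_univ, Fintype.card_fin, nsmul_eq_mul]
      _ ≤ _ := Finset.sum_le_sum fun j _ => hipS b hb j
  have key2 : ∑ b ∈ B, ((b - mx (B.filter (· < b))) * ∑ j : Fin k, (∑ v ∈ Finset.univ.filter
        (fun v => if col v = j then 1 - x' v < b else b ≤ x' v), c v))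
      = ∑ v : V, ((1/2 - m2 v) * c v + ((k:ℝ)-1) * (A v * c v)) := by
    calc ∑ b ∈ B, ((b - mx (B.filter (· < b))) * ∑ j : Fin k, (∑ v ∈ Finset.univ.filter
          (fun v => if col v = j then 1 - x' v < b else b ≤ x' v), c v))
        = ∑ b ∈ B, ∑ v : V, ((b - mx (B.filter (· < b))) * (if 1 - x' v < b then c v else 0)
            + ((k:ℝ)-1) * ((b - mx (B.filter (· < b))) * (if b ≤ x' v then c v else 0))) := by
          refine Finset.sum_congr rfl fun b hb => ?_
          rw [hcost b hb, Finset.mul_sum]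
          exact Finset.sum_congr rfl fun v _ => by ring
      _ = ∑ v : V, ∑ b ∈ B, ((b - mx (B.filter (· < b))) * (if 1 - x' v < b then c v else 0)
            + ((k:ℝ)-1) * ((b - mx (B.filter (· < b))) * (if b ≤ x' v then c v else 0))) :=
          Finset.sum_comm
      _ = ∑ v : V, ((1/2 - m2 v) * c v + ((k:ℝ)-1) * (A v * c v)) := by
          refine Finset.sum_congr rfl fun v _ => ?_
          rw [Finset.sum_add_distrib, ← Finset.mul_sum, hgen1 (x' v) (c v), hgen2 (1 - x' v) (c v)]
  have key3 : ∑ v : V, ((1/2 - m2 v) * c v + ((k:ℝ)-1) * (A v * c v))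
      ≤ ((k:ℝ)-1) * ∑ v : V, c v * x v := by
    rw [Finset.mul_sum]
    apply Finset.sum_le_sum
    intro v _
    have h1 : (1/2 - m2 v) + ((k:ℝ)-1) * A v ≤ ((k:ℝ)-1) * x v := by
      nlinarith [hA_le v, hcomb v, hA0 v, hx'le v, hx'0 v,
        mul_nonneg (by linarith : (0:ℝ) ≤ (k:ℝ)-2) (by linarith [hA_le v] : 0 ≤ x' v - A v),
        mul_nonneg (by linarith : (0:ℝ) ≤ (k:ℝ)-1) (by linarith [hx'le v] : 0 ≤ x v - x' v)]
    have h2 := mul_le_mul_of_nonneg_left h1 (hc v)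
    nlinarith [h2]
  -- conclude
  have hfin : (k:ℝ) * (1/2) * ipVal G c ≤ ((k:ℝ)-1) * ∑ v : V, c v * x v := by
    calc (k:ℝ) * (1/2) * ipVal G c ≤ _ := key1
      _ = _ := key2
      _ ≤ _ := key3
  have hne : (k:ℝ) ≠ 0 := ne_of_gt hk0
  have hmul := mul_le_mul_of_nonneg_left hfin
    (le_of_lt (show (0:ℝ) < 2 / (k:ℝ) by positivity))
  calc ipVal G c = 2 / (k:ℝ) * ((k:ℝ) * (1/2) * ipVal G c) := by field_simp
    _ ≤ 2 / (k:ℝ) * (((k:ℝ)-1) * ∑ v : V, c v * x v) := hmul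
    _ = (2 - 2 / (k:ℝ)) * ∑ v, c v * x v := by field_simp

lemma ip_le_lp {V : Type*} [Fintype V] [DecidableEq V] (G : SimpleGraph V)
    (k : ℕ) (hk2 : 2 ≤ k) (col : G.Coloring (Fin k)) (c : V → ℝ) (hc : ∀ v, 0 ≤ c v) :
    ipVal G c ≤ (2 - 2 / (k : ℝ)) * lpVal G c := by
  have hkR : (2:ℝ) ≤ (k:ℝ) := by exact_mod_cast hk2
  have hpos : (0:ℝ) < 2 - 2 / (k:ℝ) := by
    rw [sub_pos, div_lt_iff₀ (by linarith : (0:ℝ) < (k:ℝ))]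
    nlinarith
  have hne : Set.Nonempty {t | ∃ x ∈ lpPoly G, t = ∑ v, c v * x v} :=
    ⟨∑ v, c v * (1:ℝ), fun _ => 1, ⟨fun v => zero_le_one, fun u v h => by norm_num⟩, rfl⟩
  have hlow : ipVal G c / (2 - 2 / (k:ℝ)) ≤ lpVal G c := by
    apply le_csInf hne
    rintro t ⟨x, hx, rfl⟩
    rw [div_le_iff₀ hpos, mul_comm]
    exact core_s13 G k hk2 col c hc x hx
  calc ipVal G c = (ipVal G c / (2 - 2/(k:ℝ))) * (2 - 2/(k:ℝ)) :=
        (div_mul_cancel₀ _ hpos.ne').symm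
    _ ≤ lpVal G c * (2 - 2/(k:ℝ)) := mul_le_mul_of_nonneg_right hlow hpos.le
    _ = (2 - 2/(k:ℝ)) * lpVal G c := mul_comm _ _


/-- If `G` is `k`-colorable then the vertex cover LP integrality gap is at most
`2 - 2/k`; in particular it is at most `3/2` for `4`-colorable (e.g. planar) graphs. -/
theorem stmt13 {V : Type*} [Fintype V] [DecidableEq V] (G : SimpleGraph V)
    (k : ℕ) (hk : G.Colorable k) :
    gap G ≤ 2 - 2 / (k : ℝ) := by
  classical
  apply Real.sSup_le
  · rintro r ⟨c, hc, hlp, rfl⟩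
    obtain ⟨col⟩ := hk
    by_cases hk2 : 2 ≤ k
    · rw [div_le_iff₀ hlp]
      exact ip_le_lp G k hk2 col c hc
    · have hk01 : k = 0 ∨ k = 1 := by omega
      rcases hk01 with rfl | rfl
      · exfalso
        have hV : IsEmpty V := ⟨fun v => (col v).elim0⟩
        have hle : lpVal G c ≤ 0 := by
          apply csInf_le
          · refine ⟨0, ?_⟩
            rintro t ⟨x, hx, rfl⟩
            exact Finset.sum_nonneg fun v _ => mul_nonneg (hc v) (hx.1 v)
          · exact ⟨fun _ => 0, ⟨fun v => le_refl 0, fun u v h => ((hV.false u)).elim⟩, by simp⟩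
        linarith
      · have hno : ∀ u v, ¬ G.Adj u v := fun u v h => (col.valid h) (Subsingleton.elim _ _)
        have hip0 : ipVal G c ≤ 0 := by
          apply csInf_le
          · refine ⟨0, ?_⟩
            rintro t ⟨S, hS, rfl⟩
            exact Finset.sum_nonneg fun v _ => hc v
          · exact ⟨∅, fun u v h => (hno u v h).elim, by simp⟩
        have h1 : ipVal G c / lpVal G c ≤ 0 :=
          div_nonpos_of_nonpos_of_nonneg hip0 hlp.le
        calc ipVal G c / lpVal G c ≤ 0 := h1
          _ ≤ 2 - 2 / ((1:ℕ):ℝ) := by norm_num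
  · by_cases hk0 : k = 0
    · subst hk0; norm_num
    · have h1 : (1:ℝ) ≤ (k:ℝ) := by exact_mod_cast Nat.one_le_iff_ne_zero.mpr hk0
      have := div_le_self (by norm_num : (0:ℝ) ≤ 2) h1
      linarith
end
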